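/- arXiv:2511.10895 — 2 statements merged into one kernel-verified Lean document; each statement's English description precedes it below -/
import Mathlib

section
/- Let t ≥ 3 be an integer, and let Q be a (2P_3, C_4, C_6, C_7, T_0, (t+1)-pentagon)-free t-frame with an associated t-frame partition (A; B_1, …, B_t; C_1, …, C_t), and set B := B_1 ∪ … ∪ B_t. Then: (a) the sets A, B_1, …, B_t, C_1, …, C_t are all cliques; (b) if A is complete to B, then Q is a t-villa with associated t-villa partition (A; B_1, …, B_t; C_1, …, C_t); (c) if A is not complete to B, then t = 3, each B_i is complete to C_i, and Q is a 5-basket with associated 5-basket partition (A; B_1, B_2, B_3; C_1, C_2, C_3; ∅). -/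
namespace Paper

open SimpleGraph

variable {V : Type} {W : Type}

/-- `G` contains no induced copy of `H` (there is no graph embedding of `H` into `G`). -/
def IndFree (G : SimpleGraph V) (H : SimpleGraph W) : Prop :=
  IsEmpty (H ↪g G)

/-- `2P₃`: the disjoint union of two paths on three vertices. -/
def twoP3 : SimpleGraph (Fin 3 ⊕ Fin 3) :=
  SimpleGraph.fromRel (fun u v =>
    match u, v with
    | Sum.inl a, Sum.inl b => (pathGraph 3).Adj a b
    | Sum.inr a, Sum.inr b => (pathGraph 3).Adj a b
    | _, _ => False)

/-- `4K₁`: the edgeless graph on four vertices. -/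
def fourK1 : SimpleGraph (Fin 4) := ⊥

/-- The cycle on `n` vertices (for `n ≥ 3`). -/
def cycleG (n : ℕ) : SimpleGraph (ZMod n) :=
  SimpleGraph.fromRel (fun u v => v = u + 1)

/-- The graph `T₀`: vertices `0,…,8` stand for `a₀,a₁,b₀,b₁,b₂,b₃,c₁,c₂,c₃`. -/
def T0 : SimpleGraph (Fin 9) :=
  SimpleGraph.fromRel (fun u v =>
    (u, v) ∈ ([(0,1),(0,2),(0,4),(0,5),(1,3),(1,4),(1,5),(2,6),(3,6),
               (4,7),(5,8),(6,7),(6,8),(7,8)] : List (Fin 9 × Fin 9)))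

/-- The `t`-pentagon: `Sum.inl ()` is the vertex `a`, `Sum.inr (Sum.inl i)` is `bᵢ`,
and `Sum.inr (Sum.inr i)` is `cᵢ`. -/
def pentagon (t : ℕ) : SimpleGraph (Unit ⊕ Fin t ⊕ Fin t) :=
  SimpleGraph.fromRel (fun u v =>
    match u, v with
    | Sum.inl _, Sum.inr (Sum.inl _) => True
    | Sum.inr (Sum.inl i), Sum.inr (Sum.inr j) => i = j
    | Sum.inr (Sum.inr _), Sum.inr (Sum.inr _) => True
    | _, _ => False)

/-- `X` is complete to `Y` in `G`. -/
def CompleteTo (G : SimpleGraph V) (X Y : Set V) : Prop :=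
  ∀ x ∈ X, ∀ y ∈ Y, G.Adj x y

/-- `X` is anticomplete to `Y` in `G`. -/
def AnticompleteTo (G : SimpleGraph V) (X Y : Set V) : Prop :=
  ∀ x ∈ X, ∀ y ∈ Y, ¬ G.Adj x y

/-- A simplicial vertex: its neighborhood is a clique. -/
def IsSimplicial (G : SimpleGraph V) (v : V) : Prop :=
  G.IsClique (G.neighborSet v)

/-- A universal vertex: adjacent to all other vertices. -/
def IsUniversal (G : SimpleGraph V) (v : V) : Prop :=
  ∀ w, w ≠ v → G.Adj v w




/-- A 5-basket partition `(A; B 0, B 1, B 2; C 0, C 1, C 2; F)` of `Q`. -/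
def IsFiveBasketPartition (Q : SimpleGraph W) (A : Set W) (B C : Fin 3 → Set W)
    (F : Set W) : Prop :=
  (∀ i, Disjoint A (B i)) ∧ (∀ i, Disjoint A (C i)) ∧ Disjoint A F ∧
  (∀ i j, i ≠ j → Disjoint (B i) (B j)) ∧
  (∀ i j, i ≠ j → Disjoint (C i) (C j)) ∧
  (∀ i j, Disjoint (B i) (C j)) ∧
  (∀ i, Disjoint (B i) F) ∧ (∀ i, Disjoint (C i) F) ∧
  (A ∪ (⋃ i, B i) ∪ (⋃ i, C i) ∪ F = Set.univ) ∧
  Q.IsClique A ∧ (∀ i, Q.IsClique (B i)) ∧ (∀ i, Q.IsClique (C i)) ∧ Q.IsClique F ∧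
  A.Nonempty ∧ (∀ i, (B i).Nonempty) ∧ (∀ i, (C i).Nonempty) ∧
  (∀ i j, i ≠ j → AnticompleteTo Q (B i) (B j)) ∧
  (∀ i j, i ≠ j → CompleteTo Q (C i) (C j)) ∧
  (∀ i, AnticompleteTo Q A (C i)) ∧
  (∀ i, CompleteTo Q (B i) (C i)) ∧
  (∀ i j, i ≠ j → AnticompleteTo Q (B i) (C j)) ∧
  (∃ istar : Fin 3,
    (∀ i, i ≠ istar → CompleteTo Q A (B i)) ∧
    (∀ a ∈ A, ∀ a' ∈ A,
      Q.neighborSet a ∩ B istar ⊆ Q.neighborSet a' ∩ B istar ∨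
      Q.neighborSet a' ∩ B istar ⊆ Q.neighborSet a ∩ B istar) ∧
    (∃ a ∈ A, B istar ⊆ Q.neighborSet a)) ∧
  (∃ jstar : Fin 3,
    CompleteTo Q F (B jstar ∪ C jstar ∪ F)ᶜ ∧
    AnticompleteTo Q F (B jstar ∪ C jstar))

/-- A 5-basket. -/
def IsFiveBasket (Q : SimpleGraph W) : Prop :=
  ∃ (A : Set W) (B C : Fin 3 → Set W) (F : Set W), IsFiveBasketPartition Q A B C F

/-- All conditions of a `t`-villa partition except that the parts exhaust the vertex set. -/
def VillaCore {t : ℕ} (Q : SimpleGraph W) (A : Set W) (B C : Fin t → Set W) : Prop :=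
  (∀ i, Disjoint A (B i)) ∧ (∀ i, Disjoint A (C i)) ∧
  (∀ i j, i ≠ j → Disjoint (B i) (B j)) ∧
  (∀ i j, i ≠ j → Disjoint (C i) (C j)) ∧
  (∀ i j, Disjoint (B i) (C j)) ∧
  Q.IsClique A ∧ (∀ i, Q.IsClique (B i)) ∧ (∀ i, Q.IsClique (C i)) ∧
  A.Nonempty ∧ (∀ i, (B i).Nonempty) ∧ (∀ i, (C i).Nonempty) ∧
  (∀ i, CompleteTo Q A (B i)) ∧ (∀ i, AnticompleteTo Q A (C i)) ∧
  (∀ i j, i ≠ j → AnticompleteTo Q (B i) (B j)) ∧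
  (∀ i j, i ≠ j → CompleteTo Q (C i) (C j)) ∧
  (∀ i j, i ≠ j → AnticompleteTo Q (B i) (C j)) ∧
  (∀ i, ∀ b ∈ B i, ∀ b' ∈ B i,
     Q.neighborSet b ∩ C i ⊆ Q.neighborSet b' ∩ C i ∨
     Q.neighborSet b' ∩ C i ⊆ Q.neighborSet b ∩ C i) ∧
  (∀ i, ∀ b ∈ B i, (Q.neighborSet b ∩ C i).Nonempty) ∧
  (∀ i, ∃ b ∈ B i, C i ⊆ Q.neighborSet b)

/-- A `t`-villa partition `(A; B 0,…,B (t-1); C 0,…,C (t-1))` of `Q`. -/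
def IsVillaPartition {t : ℕ} (Q : SimpleGraph W) (A : Set W) (B C : Fin t → Set W) : Prop :=
  VillaCore Q A B C ∧ A ∪ (⋃ i, B i) ∪ (⋃ i, C i) = Set.univ

/-- A `t`-villa. -/
def IsTVilla (t : ℕ) (Q : SimpleGraph W) : Prop :=
  ∃ (A : Set W) (B C : Fin t → Set W), IsVillaPartition Q A B C

/-- A villa: a `t`-villa for some `t ≥ 3`. -/
def IsVilla (Q : SimpleGraph W) : Prop :=
  ∃ t, 3 ≤ t ∧ IsTVilla t Q

/-- A `t`-mansion partition `(A; B; C; F; X; Y)` of `Q`. -/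
def IsMansionPartition {t : ℕ} (Q : SimpleGraph W) (A : Set W) (B C : Fin t → Set W)
    (F X Y : Set W) : Prop :=
  VillaCore Q A B C ∧
  Disjoint A F ∧ Disjoint A X ∧ Disjoint A Y ∧
  (∀ i, Disjoint (B i) F) ∧ (∀ i, Disjoint (B i) X) ∧ (∀ i, Disjoint (B i) Y) ∧
  (∀ i, Disjoint (C i) F) ∧ (∀ i, Disjoint (C i) X) ∧ (∀ i, Disjoint (C i) Y) ∧
  Disjoint F X ∧ Disjoint F Y ∧ Disjoint X Y ∧
  (A ∪ (⋃ i, B i) ∪ (⋃ i, C i) ∪ F ∪ X ∪ Y = Set.univ) ∧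
  Q.IsClique F ∧ Q.IsClique X ∧ Q.IsClique Y ∧ F.Nonempty ∧
  (∃ jstar : Fin t,
    CompleteTo Q F A ∧
    (∀ i, i ≠ jstar → CompleteTo Q F (B i)) ∧
    (∀ i, i ≠ jstar → CompleteTo Q F (C i)) ∧
    AnticompleteTo Q F (B jstar) ∧ AnticompleteTo Q F (C jstar) ∧
    CompleteTo Q (B jstar) (C jstar) ∧
    CompleteTo Q X A ∧ CompleteTo Q X (B jstar) ∧
    (∀ i, i ≠ jstar → AnticompleteTo Q X (B i)) ∧
    (∀ i, AnticompleteTo Q X (C i))) ∧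
  CompleteTo Q F X ∧ CompleteTo Q F Y ∧
  AnticompleteTo Q X Y ∧
  (∀ i, CompleteTo Q Y (C i)) ∧
  AnticompleteTo Q Y A ∧ (∀ i, AnticompleteTo Q Y (B i))

/-- A `t`-mansion. -/
def IsTMansion (t : ℕ) (Q : SimpleGraph W) : Prop :=
  ∃ (A : Set W) (B C : Fin t → Set W) (F X Y : Set W),
    IsMansionPartition Q A B C F X Y

/-- A mansion: a `t`-mansion for some `t ≥ 3`. -/
def IsMansion (Q : SimpleGraph W) : Prop :=
  ∃ t, 3 ≤ t ∧ IsTMansion t Q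

/-- A `t`-frame partition of `Q`. -/
def IsFramePartition {t : ℕ} (Q : SimpleGraph W) (A : Set W) (B C : Fin t → Set W) : Prop :=
  (∀ i, Disjoint A (B i)) ∧ (∀ i, Disjoint A (C i)) ∧
  (∀ i j, i ≠ j → Disjoint (B i) (B j)) ∧
  (∀ i j, i ≠ j → Disjoint (C i) (C j)) ∧
  (∀ i j, Disjoint (B i) (C j)) ∧
  (A ∪ (⋃ i, B i) ∪ (⋃ i, C i) = Set.univ) ∧
  A.Nonempty ∧ (∀ i, (B i).Nonempty) ∧ (∀ i, (C i).Nonempty) ∧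
  (∀ a ∈ A, ∃ i j : Fin t, i ≠ j ∧ (∃ b ∈ B i, Q.Adj a b) ∧ (∃ b ∈ B j, Q.Adj a b)) ∧
  (∀ i, AnticompleteTo Q A (C i)) ∧
  (∀ i j, i ≠ j → AnticompleteTo Q (B i) (B j)) ∧
  (∀ i j, i ≠ j → CompleteTo Q (C i) (C j)) ∧
  (∀ i j, i ≠ j → AnticompleteTo Q (B i) (C j)) ∧
  (∀ i, ∀ b ∈ B i, ∃ a ∈ A, Q.Adj b a) ∧
  (∀ i, ∀ b ∈ B i, ∃ c ∈ C i, Q.Adj b c) ∧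
  (∀ i, ∀ c ∈ C i, ∃ b ∈ B i, Q.Adj c b)

/-- A `k`-ring partition of `Q` (indices modulo `k`). -/
def IsRingPartition {k : ℕ} (Q : SimpleGraph W) (X : ZMod k → Set W) : Prop :=
  (∀ i j, i ≠ j → Disjoint (X i) (X j)) ∧
  (⋃ i, X i) = Set.univ ∧
  (∀ i, (X i).Nonempty) ∧
  (∀ i, ∀ u ∈ X i, X i ⊆ insert u (Q.neighborSet u)) ∧
  (∀ i, ∀ u ∈ X i, ∀ u' ∈ X i,
     insert u (Q.neighborSet u) ⊆ insert u' (Q.neighborSet u') ∨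
     insert u' (Q.neighborSet u') ⊆ insert u (Q.neighborSet u)) ∧
  (∀ i, ∀ u ∈ X i, insert u (Q.neighborSet u) ⊆ X (i-1) ∪ X i ∪ X (i+1)) ∧
  (∀ i, ∃ u ∈ X i, X (i-1) ∪ X i ∪ X (i+1) ⊆ insert u (Q.neighborSet u))

/-- A `k`-ring. -/
def IsRing (k : ℕ) (Q : SimpleGraph W) : Prop :=
  ∃ X : ZMod k → Set W, IsRingPartition Q X

/-- A 5-crown. -/
def IsFiveCrown (Q : SimpleGraph W) : Prop :=
  ∃ X : ZMod 5 → Set W, IsRingPartition Q X ∧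
    ∃ istar : ZMod 5, CompleteTo Q (X (istar - 1)) (X (istar - 2)) ∧
      CompleteTo Q (X (istar + 1)) (X (istar + 2))



variable {Q : SimpleGraph W}

lemma noC6 {Q : SimpleGraph W} (hfree : IndFree Q (cycleG 6)) {w0 w1 w2 w3 w4 w5 : W}
    (h01 : Q.Adj w0 w1)
    (h12 : Q.Adj w1 w2)
    (h23 : Q.Adj w2 w3)
    (h34 : Q.Adj w3 w4)
    (h45 : Q.Adj w4 w5)
    (h05 : Q.Adj w0 w5)
    (n02 : ¬ Q.Adj w0 w2) (d02 : w0 ≠ w2)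
    (n03 : ¬ Q.Adj w0 w3) (d03 : w0 ≠ w3)
    (n04 : ¬ Q.Adj w0 w4) (d04 : w0 ≠ w4)
    (n13 : ¬ Q.Adj w1 w3) (d13 : w1 ≠ w3)
    (n14 : ¬ Q.Adj w1 w4) (d14 : w1 ≠ w4)
    (n15 : ¬ Q.Adj w1 w5) (d15 : w1 ≠ w5)
    (n24 : ¬ Q.Adj w2 w4) (d24 : w2 ≠ w4)
    (n25 : ¬ Q.Adj w2 w5) (d25 : w2 ≠ w5)
    (n35 : ¬ Q.Adj w3 w5) (d35 : w3 ≠ w5)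
    : False := by
  have dall : ∀ z : ZMod 6, z = 0 ∨ z = 1 ∨ z = 2 ∨ z = 3 ∨ z = 4 ∨ z = 5 := by decide
  have h10 := h01.symm
  have d01 := h01.ne; have d10 := h01.ne'
  have h21 := h12.symm
  have d12 := h12.ne; have d21 := h12.ne'
  have h32 := h23.symm
  have d23 := h23.ne; have d32 := h23.ne'
  have h43 := h34.symm
  have d34 := h34.ne; have d43 := h34.ne'
  have h54 := h45.symm
  have d45 := h45.ne; have d54 := h45.ne'
  have h50 := h05.symm
  have d05 := h05.ne; have d50 := h05.ne'
  have n20 : ¬ Q.Adj w2 w0 := fun h => n02 h.symm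
  have d20 := d02.symm
  have n30 : ¬ Q.Adj w3 w0 := fun h => n03 h.symm
  have d30 := d03.symm
  have n40 : ¬ Q.Adj w4 w0 := fun h => n04 h.symm
  have d40 := d04.symm
  have n31 : ¬ Q.Adj w3 w1 := fun h => n13 h.symm
  have d31 := d13.symm
  have n41 : ¬ Q.Adj w4 w1 := fun h => n14 h.symm
  have d41 := d14.symm
  have n51 : ¬ Q.Adj w5 w1 := fun h => n15 h.symm
  have d51 := d15.symm
  have n42 : ¬ Q.Adj w4 w2 := fun h => n24 h.symm
  have d42 := d24.symm
  have n52 : ¬ Q.Adj w5 w2 := fun h => n25 h.symm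
  have d52 := d25.symm
  have n53 : ¬ Q.Adj w5 w3 := fun h => n35 h.symm
  have d53 := d35.symm
  let f : ZMod 6 → W := ![w0,w1,w2,w3,w4,w5]
  apply hfree.false
  refine ⟨⟨f, ?_⟩, ?_⟩
  · intro u v huv
    rcases dall u with rfl|rfl|rfl|rfl|rfl|rfl <;> rcases dall v with rfl|rfl|rfl|rfl|rfl|rfl <;>
      first
        | rfl
        | (exfalso; revert huv; show ¬ _ = _; first
            | exact d01 | exact d02 | exact d03 | exact d04 | exact d05 | exact d10
            | exact d12 | exact d13 | exact d14 | exact d15 | exact d20 | exact d21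
            | exact d23 | exact d24 | exact d25 | exact d30 | exact d31 | exact d32
            | exact d34 | exact d35 | exact d40 | exact d41 | exact d42 | exact d43
            | exact d45 | exact d50 | exact d51 | exact d52 | exact d53 | exact d54)
  · intro u v
    rcases dall u with rfl|rfl|rfl|rfl|rfl|rfl <;> rcases dall v with rfl|rfl|rfl|rfl|rfl|rfl <;>
      (first
        | refine iff_of_true ?_ (by rw [cycleG]; simp only [SimpleGraph.fromRel_adj]; decide)
        | refine iff_of_false ?_ (by rw [cycleG]; simp only [SimpleGraph.fromRel_adj]; decide)) <;>
      first
        | exact Q.loopless.irrefl _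
        | assumption

lemma noC7 {Q : SimpleGraph W} (hfree : IndFree Q (cycleG 7)) {w0 w1 w2 w3 w4 w5 w6 : W}
    (h01 : Q.Adj w0 w1)
    (h12 : Q.Adj w1 w2)
    (h23 : Q.Adj w2 w3)
    (h34 : Q.Adj w3 w4)
    (h45 : Q.Adj w4 w5)
    (h56 : Q.Adj w5 w6)
    (h06 : Q.Adj w0 w6)
    (n02 : ¬ Q.Adj w0 w2) (d02 : w0 ≠ w2)
    (n03 : ¬ Q.Adj w0 w3) (d03 : w0 ≠ w3)
    (n04 : ¬ Q.Adj w0 w4) (d04 : w0 ≠ w4)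
    (n05 : ¬ Q.Adj w0 w5) (d05 : w0 ≠ w5)
    (n13 : ¬ Q.Adj w1 w3) (d13 : w1 ≠ w3)
    (n14 : ¬ Q.Adj w1 w4) (d14 : w1 ≠ w4)
    (n15 : ¬ Q.Adj w1 w5) (d15 : w1 ≠ w5)
    (n16 : ¬ Q.Adj w1 w6) (d16 : w1 ≠ w6)
    (n24 : ¬ Q.Adj w2 w4) (d24 : w2 ≠ w4)
    (n25 : ¬ Q.Adj w2 w5) (d25 : w2 ≠ w5)
    (n26 : ¬ Q.Adj w2 w6) (d26 : w2 ≠ w6)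
    (n35 : ¬ Q.Adj w3 w5) (d35 : w3 ≠ w5)
    (n36 : ¬ Q.Adj w3 w6) (d36 : w3 ≠ w6)
    (n46 : ¬ Q.Adj w4 w6) (d46 : w4 ≠ w6)
    : False := by
  have dall : ∀ z : ZMod 7, z = 0 ∨ z = 1 ∨ z = 2 ∨ z = 3 ∨ z = 4 ∨ z = 5 ∨ z = 6 := by decide
  have h10 := h01.symm
  have d01 := h01.ne; have d10 := h01.ne'
  have h21 := h12.symm
  have d12 := h12.ne; have d21 := h12.ne'
  have h32 := h23.symm
  have d23 := h23.ne; have d32 := h23.ne'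
  have h43 := h34.symm
  have d34 := h34.ne; have d43 := h34.ne'
  have h54 := h45.symm
  have d45 := h45.ne; have d54 := h45.ne'
  have h65 := h56.symm
  have d56 := h56.ne; have d65 := h56.ne'
  have h60 := h06.symm
  have d06 := h06.ne; have d60 := h06.ne'
  have n20 : ¬ Q.Adj w2 w0 := fun h => n02 h.symm
  have d20 := d02.symm
  have n30 : ¬ Q.Adj w3 w0 := fun h => n03 h.symm
  have d30 := d03.symm
  have n40 : ¬ Q.Adj w4 w0 := fun h => n04 h.symm
  have d40 := d04.symm
  have n50 : ¬ Q.Adj w5 w0 := fun h => n05 h.symm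
  have d50 := d05.symm
  have n31 : ¬ Q.Adj w3 w1 := fun h => n13 h.symm
  have d31 := d13.symm
  have n41 : ¬ Q.Adj w4 w1 := fun h => n14 h.symm
  have d41 := d14.symm
  have n51 : ¬ Q.Adj w5 w1 := fun h => n15 h.symm
  have d51 := d15.symm
  have n61 : ¬ Q.Adj w6 w1 := fun h => n16 h.symm
  have d61 := d16.symm
  have n42 : ¬ Q.Adj w4 w2 := fun h => n24 h.symm
  have d42 := d24.symm
  have n52 : ¬ Q.Adj w5 w2 := fun h => n25 h.symm
  have d52 := d25.symm
  have n62 : ¬ Q.Adj w6 w2 := fun h => n26 h.symm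
  have d62 := d26.symm
  have n53 : ¬ Q.Adj w5 w3 := fun h => n35 h.symm
  have d53 := d35.symm
  have n63 : ¬ Q.Adj w6 w3 := fun h => n36 h.symm
  have d63 := d36.symm
  have n64 : ¬ Q.Adj w6 w4 := fun h => n46 h.symm
  have d64 := d46.symm
  let f : ZMod 7 → W := ![w0,w1,w2,w3,w4,w5,w6]
  apply hfree.false
  refine ⟨⟨f, ?_⟩, ?_⟩
  · intro u v huv
    rcases dall u with rfl|rfl|rfl|rfl|rfl|rfl|rfl <;> rcases dall v with rfl|rfl|rfl|rfl|rfl|rfl|rfl <;>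
      first
        | rfl
        | (exfalso; revert huv; show ¬ _ = _; first
            | exact d01 | exact d02 | exact d03 | exact d04 | exact d05 | exact d06
            | exact d10 | exact d12 | exact d13 | exact d14 | exact d15 | exact d16
            | exact d20 | exact d21 | exact d23 | exact d24 | exact d25 | exact d26
            | exact d30 | exact d31 | exact d32 | exact d34 | exact d35 | exact d36
            | exact d40 | exact d41 | exact d42 | exact d43 | exact d45 | exact d46
            | exact d50 | exact d51 | exact d52 | exact d53 | exact d54 | exact d56
            | exact d60 | exact d61 | exact d62 | exact d63 | exact d64 | exact d65)
  · intro u v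
    rcases dall u with rfl|rfl|rfl|rfl|rfl|rfl|rfl <;> rcases dall v with rfl|rfl|rfl|rfl|rfl|rfl|rfl <;>
      (first
        | refine iff_of_true ?_ (by rw [cycleG]; simp only [SimpleGraph.fromRel_adj]; decide)
        | refine iff_of_false ?_ (by rw [cycleG]; simp only [SimpleGraph.fromRel_adj]; decide)) <;>
      first
        | exact Q.loopless.irrefl _
        | assumption

lemma no2P3 {Q : SimpleGraph W} (hfree : IndFree Q twoP3) {w0 w1 w2 w3 w4 w5 : W}
    (h01 : Q.Adj w0 w1)
    (h12 : Q.Adj w1 w2)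
    (h34 : Q.Adj w3 w4)
    (h45 : Q.Adj w4 w5)
    (n02 : ¬ Q.Adj w0 w2) (d02 : w0 ≠ w2)
    (n03 : ¬ Q.Adj w0 w3) (d03 : w0 ≠ w3)
    (n04 : ¬ Q.Adj w0 w4) (d04 : w0 ≠ w4)
    (n05 : ¬ Q.Adj w0 w5) (d05 : w0 ≠ w5)
    (n13 : ¬ Q.Adj w1 w3) (d13 : w1 ≠ w3)
    (n14 : ¬ Q.Adj w1 w4) (d14 : w1 ≠ w4)
    (n15 : ¬ Q.Adj w1 w5) (d15 : w1 ≠ w5)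
    (n23 : ¬ Q.Adj w2 w3) (d23 : w2 ≠ w3)
    (n24 : ¬ Q.Adj w2 w4) (d24 : w2 ≠ w4)
    (n25 : ¬ Q.Adj w2 w5) (d25 : w2 ≠ w5)
    (n35 : ¬ Q.Adj w3 w5) (d35 : w3 ≠ w5)
    : False := by
  have dall : ∀ z : Fin 3 ⊕ Fin 3, z = Sum.inl 0 ∨ z = Sum.inl 1 ∨ z = Sum.inl 2 ∨ z = Sum.inr 0 ∨ z = Sum.inr 1 ∨ z = Sum.inr 2 := by decide
  have h10 := h01.symm
  have d01 := h01.ne; have d10 := h01.ne'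
  have h21 := h12.symm
  have d12 := h12.ne; have d21 := h12.ne'
  have h43 := h34.symm
  have d34 := h34.ne; have d43 := h34.ne'
  have h54 := h45.symm
  have d45 := h45.ne; have d54 := h45.ne'
  have n20 : ¬ Q.Adj w2 w0 := fun h => n02 h.symm
  have d20 := d02.symm
  have n30 : ¬ Q.Adj w3 w0 := fun h => n03 h.symm
  have d30 := d03.symm
  have n40 : ¬ Q.Adj w4 w0 := fun h => n04 h.symm
  have d40 := d04.symm
  have n50 : ¬ Q.Adj w5 w0 := fun h => n05 h.symm
  have d50 := d05.symm
  have n31 : ¬ Q.Adj w3 w1 := fun h => n13 h.symm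
  have d31 := d13.symm
  have n41 : ¬ Q.Adj w4 w1 := fun h => n14 h.symm
  have d41 := d14.symm
  have n51 : ¬ Q.Adj w5 w1 := fun h => n15 h.symm
  have d51 := d15.symm
  have n32 : ¬ Q.Adj w3 w2 := fun h => n23 h.symm
  have d32 := d23.symm
  have n42 : ¬ Q.Adj w4 w2 := fun h => n24 h.symm
  have d42 := d24.symm
  have n52 : ¬ Q.Adj w5 w2 := fun h => n25 h.symm
  have d52 := d25.symm
  have n53 : ¬ Q.Adj w5 w3 := fun h => n35 h.symm
  have d53 := d35.symm
  let f : Fin 3 ⊕ Fin 3 → W := Sum.elim ![w0,w1,w2] ![w3,w4,w5]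
  apply hfree.false
  refine ⟨⟨f, ?_⟩, ?_⟩
  · intro u v huv
    rcases dall u with rfl|rfl|rfl|rfl|rfl|rfl <;> rcases dall v with rfl|rfl|rfl|rfl|rfl|rfl <;>
      first
        | rfl
        | (exfalso; revert huv; show ¬ _ = _; first
            | exact d01 | exact d02 | exact d03 | exact d04 | exact d05 | exact d10
            | exact d12 | exact d13 | exact d14 | exact d15 | exact d20 | exact d21
            | exact d23 | exact d24 | exact d25 | exact d30 | exact d31 | exact d32
            | exact d34 | exact d35 | exact d40 | exact d41 | exact d42 | exact d43
            | exact d45 | exact d50 | exact d51 | exact d52 | exact d53 | exact d54)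
  · intro u v
    rcases dall u with rfl|rfl|rfl|rfl|rfl|rfl <;> rcases dall v with rfl|rfl|rfl|rfl|rfl|rfl <;>
      (first
        | refine iff_of_true ?_ (by rw [twoP3]; simp only [SimpleGraph.fromRel_adj, SimpleGraph.pathGraph_adj]; decide)
        | refine iff_of_false ?_ (by rw [twoP3]; simp only [SimpleGraph.fromRel_adj, SimpleGraph.pathGraph_adj]; decide)) <;>
      first
        | exact Q.loopless.irrefl _
        | assumption

lemma noT0 {Q : SimpleGraph W} (hfree : IndFree Q T0) {w0 w1 w2 w3 w4 w5 w6 w7 w8 : W}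
    (h01 : Q.Adj w0 w1)
    (h02 : Q.Adj w0 w2)
    (h04 : Q.Adj w0 w4)
    (h05 : Q.Adj w0 w5)
    (h13 : Q.Adj w1 w3)
    (h14 : Q.Adj w1 w4)
    (h15 : Q.Adj w1 w5)
    (h26 : Q.Adj w2 w6)
    (h36 : Q.Adj w3 w6)
    (h47 : Q.Adj w4 w7)
    (h58 : Q.Adj w5 w8)
    (h67 : Q.Adj w6 w7)
    (h68 : Q.Adj w6 w8)
    (h78 : Q.Adj w7 w8)
    (n03 : ¬ Q.Adj w0 w3) (d03 : w0 ≠ w3)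
    (n06 : ¬ Q.Adj w0 w6) (d06 : w0 ≠ w6)
    (n07 : ¬ Q.Adj w0 w7) (d07 : w0 ≠ w7)
    (n08 : ¬ Q.Adj w0 w8) (d08 : w0 ≠ w8)
    (n12 : ¬ Q.Adj w1 w2) (d12 : w1 ≠ w2)
    (n16 : ¬ Q.Adj w1 w6) (d16 : w1 ≠ w6)
    (n17 : ¬ Q.Adj w1 w7) (d17 : w1 ≠ w7)
    (n18 : ¬ Q.Adj w1 w8) (d18 : w1 ≠ w8)
    (n23 : ¬ Q.Adj w2 w3) (d23 : w2 ≠ w3)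
    (n24 : ¬ Q.Adj w2 w4) (d24 : w2 ≠ w4)
    (n25 : ¬ Q.Adj w2 w5) (d25 : w2 ≠ w5)
    (n27 : ¬ Q.Adj w2 w7) (d27 : w2 ≠ w7)
    (n28 : ¬ Q.Adj w2 w8) (d28 : w2 ≠ w8)
    (n34 : ¬ Q.Adj w3 w4) (d34 : w3 ≠ w4)
    (n35 : ¬ Q.Adj w3 w5) (d35 : w3 ≠ w5)
    (n37 : ¬ Q.Adj w3 w7) (d37 : w3 ≠ w7)
    (n38 : ¬ Q.Adj w3 w8) (d38 : w3 ≠ w8)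
    (n45 : ¬ Q.Adj w4 w5) (d45 : w4 ≠ w5)
    (n46 : ¬ Q.Adj w4 w6) (d46 : w4 ≠ w6)
    (n48 : ¬ Q.Adj w4 w8) (d48 : w4 ≠ w8)
    (n56 : ¬ Q.Adj w5 w6) (d56 : w5 ≠ w6)
    (n57 : ¬ Q.Adj w5 w7) (d57 : w5 ≠ w7)
    : False := by
  have dall : ∀ z : Fin 9, z = 0 ∨ z = 1 ∨ z = 2 ∨ z = 3 ∨ z = 4 ∨ z = 5 ∨ z = 6 ∨ z = 7 ∨ z = 8 := by decide
  have h10 := h01.symm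
  have d01 := h01.ne; have d10 := h01.ne'
  have h20 := h02.symm
  have d02 := h02.ne; have d20 := h02.ne'
  have h40 := h04.symm
  have d04 := h04.ne; have d40 := h04.ne'
  have h50 := h05.symm
  have d05 := h05.ne; have d50 := h05.ne'
  have h31 := h13.symm
  have d13 := h13.ne; have d31 := h13.ne'
  have h41 := h14.symm
  have d14 := h14.ne; have d41 := h14.ne'
  have h51 := h15.symm
  have d15 := h15.ne; have d51 := h15.ne'
  have h62 := h26.symm
  have d26 := h26.ne; have d62 := h26.ne'
  have h63 := h36.symm
  have d36 := h36.ne; have d63 := h36.ne'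
  have h74 := h47.symm
  have d47 := h47.ne; have d74 := h47.ne'
  have h85 := h58.symm
  have d58 := h58.ne; have d85 := h58.ne'
  have h76 := h67.symm
  have d67 := h67.ne; have d76 := h67.ne'
  have h86 := h68.symm
  have d68 := h68.ne; have d86 := h68.ne'
  have h87 := h78.symm
  have d78 := h78.ne; have d87 := h78.ne'
  have n30 : ¬ Q.Adj w3 w0 := fun h => n03 h.symm
  have d30 := d03.symm
  have n60 : ¬ Q.Adj w6 w0 := fun h => n06 h.symm
  have d60 := d06.symm
  have n70 : ¬ Q.Adj w7 w0 := fun h => n07 h.symm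
  have d70 := d07.symm
  have n80 : ¬ Q.Adj w8 w0 := fun h => n08 h.symm
  have d80 := d08.symm
  have n21 : ¬ Q.Adj w2 w1 := fun h => n12 h.symm
  have d21 := d12.symm
  have n61 : ¬ Q.Adj w6 w1 := fun h => n16 h.symm
  have d61 := d16.symm
  have n71 : ¬ Q.Adj w7 w1 := fun h => n17 h.symm
  have d71 := d17.symm
  have n81 : ¬ Q.Adj w8 w1 := fun h => n18 h.symm
  have d81 := d18.symm
  have n32 : ¬ Q.Adj w3 w2 := fun h => n23 h.symm
  have d32 := d23.symm
  have n42 : ¬ Q.Adj w4 w2 := fun h => n24 h.symm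
  have d42 := d24.symm
  have n52 : ¬ Q.Adj w5 w2 := fun h => n25 h.symm
  have d52 := d25.symm
  have n72 : ¬ Q.Adj w7 w2 := fun h => n27 h.symm
  have d72 := d27.symm
  have n82 : ¬ Q.Adj w8 w2 := fun h => n28 h.symm
  have d82 := d28.symm
  have n43 : ¬ Q.Adj w4 w3 := fun h => n34 h.symm
  have d43 := d34.symm
  have n53 : ¬ Q.Adj w5 w3 := fun h => n35 h.symm
  have d53 := d35.symm
  have n73 : ¬ Q.Adj w7 w3 := fun h => n37 h.symm
  have d73 := d37.symm
  have n83 : ¬ Q.Adj w8 w3 := fun h => n38 h.symm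
  have d83 := d38.symm
  have n54 : ¬ Q.Adj w5 w4 := fun h => n45 h.symm
  have d54 := d45.symm
  have n64 : ¬ Q.Adj w6 w4 := fun h => n46 h.symm
  have d64 := d46.symm
  have n84 : ¬ Q.Adj w8 w4 := fun h => n48 h.symm
  have d84 := d48.symm
  have n65 : ¬ Q.Adj w6 w5 := fun h => n56 h.symm
  have d65 := d56.symm
  have n75 : ¬ Q.Adj w7 w5 := fun h => n57 h.symm
  have d75 := d57.symm
  let f : Fin 9 → W := ![w0,w1,w2,w3,w4,w5,w6,w7,w8]
  apply hfree.false
  refine ⟨⟨f, ?_⟩, ?_⟩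
  · intro u v huv
    rcases dall u with rfl|rfl|rfl|rfl|rfl|rfl|rfl|rfl|rfl <;> rcases dall v with rfl|rfl|rfl|rfl|rfl|rfl|rfl|rfl|rfl <;>
      first
        | rfl
        | (exfalso; revert huv; show ¬ _ = _; first
            | exact d01 | exact d02 | exact d03 | exact d04 | exact d05 | exact d06
            | exact d07 | exact d08 | exact d10 | exact d12 | exact d13 | exact d14
            | exact d15 | exact d16 | exact d17 | exact d18 | exact d20 | exact d21
            | exact d23 | exact d24 | exact d25 | exact d26 | exact d27 | exact d28
            | exact d30 | exact d31 | exact d32 | exact d34 | exact d35 | exact d36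
            | exact d37 | exact d38 | exact d40 | exact d41 | exact d42 | exact d43
            | exact d45 | exact d46 | exact d47 | exact d48 | exact d50 | exact d51
            | exact d52 | exact d53 | exact d54 | exact d56 | exact d57 | exact d58
            | exact d60 | exact d61 | exact d62 | exact d63 | exact d64 | exact d65
            | exact d67 | exact d68 | exact d70 | exact d71 | exact d72 | exact d73
            | exact d74 | exact d75 | exact d76 | exact d78 | exact d80 | exact d81
            | exact d82 | exact d83 | exact d84 | exact d85 | exact d86 | exact d87)
  · intro u v
    rcases dall u with rfl|rfl|rfl|rfl|rfl|rfl|rfl|rfl|rfl <;> rcases dall v with rfl|rfl|rfl|rfl|rfl|rfl|rfl|rfl|rfl <;>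
      (first
        | refine iff_of_true ?_ (by rw [T0]; simp only [SimpleGraph.fromRel_adj]; decide)
        | refine iff_of_false ?_ (by rw [T0]; simp only [SimpleGraph.fromRel_adj]; decide)) <;>
      first
        | exact Q.loopless.irrefl _
        | assumption

lemma noC4 {Q : SimpleGraph W} (hfree : IndFree Q (cycleG 4)) {w0 w1 w2 w3 : W}
    (h01 : Q.Adj w0 w1) (h12 : Q.Adj w1 w2) (h23 : Q.Adj w2 w3) (h30 : Q.Adj w3 w0)
    (n02 : ¬ Q.Adj w0 w2) (n13 : ¬ Q.Adj w1 w3)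
    (d02 : w0 ≠ w2) (d13 : w1 ≠ w3) : False := by
  have dall : ∀ z : ZMod 4, z = 0 ∨ z = 1 ∨ z = 2 ∨ z = 3 := by decide
  have h10 := h01.symm; have h21 := h12.symm; have h32 := h23.symm; have h03 := h30.symm
  have n20 : ¬ Q.Adj w2 w0 := fun h => n02 h.symm
  have n31 : ¬ Q.Adj w3 w1 := fun h => n13 h.symm
  have d20 := d02.symm; have d31 := d13.symm
  have d01 := h01.ne; have d12 := h12.ne; have d23 := h23.ne; have d30 := h30.ne
  have d10 := h01.ne'; have d21 := h12.ne'; have d32 := h23.ne'; have d03 := h30.ne'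
  let f : ZMod 4 → W := ![w0,w1,w2,w3]
  apply hfree.false
  refine ⟨⟨f, ?_⟩, ?_⟩
  · intro u v huv
    rcases dall u with rfl|rfl|rfl|rfl <;> rcases dall v with rfl|rfl|rfl|rfl <;>
      first
        | rfl
        | (exfalso; revert huv; show ¬ _ = _; first
            | exact d01 | exact d10 | exact d02 | exact d20 | exact d03 | exact d30
            | exact d12 | exact d21 | exact d13 | exact d31 | exact d23 | exact d32)
  · intro u v
    rcases dall u with rfl|rfl|rfl|rfl <;> rcases dall v with rfl|rfl|rfl|rfl <;>
      (first | refine iff_of_true ?_ (by rw [cycleG]; simp only [SimpleGraph.fromRel_adj]; decide) | refine iff_of_false ?_ (by rw [cycleG]; simp only [SimpleGraph.fromRel_adj]; decide)) <;>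
      first
        | exact Q.irrefl
        | assumption

lemma noPentagon {t : ℕ} {Q : SimpleGraph W} (hfree : IndFree Q (pentagon (t+1)))
    (a : W) (bb cc : Fin (t+1) → W)
    (hab : ∀ i, Q.Adj a (bb i)) (hac : ∀ i, ¬ Q.Adj a (cc i)) (hane : ∀ i, a ≠ cc i)
    (hbc : ∀ i, Q.Adj (bb i) (cc i)) (hbcn : ∀ i j, i ≠ j → ¬ Q.Adj (bb i) (cc j))
    (hbcne : ∀ i j, bb i ≠ cc j)
    (hbb : ∀ i j, i ≠ j → ¬ Q.Adj (bb i) (bb j)) (hbbne : ∀ i j, i ≠ j → bb i ≠ bb j)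
    (hcc : ∀ i j, i ≠ j → Q.Adj (cc i) (cc j)) : False := by
  apply hfree.false
  refine ⟨⟨Sum.elim (fun _ => a) (Sum.elim bb cc), ?_⟩, ?_⟩
  · rintro (u|u|u) (v|v|v) h <;> simp only [Sum.elim_inl, Sum.elim_inr] at h
    · rfl
    · exact absurd h (hab v).ne
    · exact absurd h (hane v)
    · exact absurd h.symm (hab u).ne
    · by_cases huv : u = v
      · exact huv ▸ rfl
      · exact absurd h (hbbne u v huv)
    · exact absurd h (hbcne u v)
    · exact absurd h.symm (hane u)
    · exact absurd h.symm (hbcne v u)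
    · by_cases huv : u = v
      · exact huv ▸ rfl
      · exact absurd h (hcc u v huv).ne
  · rintro (u|u|u) (v|v|v)
    · exact iff_of_false (Q.loopless.irrefl _) (by simp [pentagon, SimpleGraph.fromRel_adj])
    · exact iff_of_true (hab v) (by simp [pentagon, SimpleGraph.fromRel_adj])
    · exact iff_of_false (hac v) (by simp [pentagon, SimpleGraph.fromRel_adj])
    · exact iff_of_true (hab u).symm (by simp [pentagon, SimpleGraph.fromRel_adj])
    · by_cases huv : u = v
      · subst huv; exact iff_of_false (Q.loopless.irrefl _) (by simp [pentagon, SimpleGraph.fromRel_adj])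
      · exact iff_of_false (hbb u v huv) (by simp [pentagon, SimpleGraph.fromRel_adj])
    · by_cases huv : u = v
      · subst huv; exact iff_of_true (hbc u) (by simp [pentagon, SimpleGraph.fromRel_adj])
      · exact iff_of_false (hbcn u v huv) (by simp [pentagon, SimpleGraph.fromRel_adj, huv])
    · exact iff_of_false (fun h => hac u h.symm) (by simp [pentagon, SimpleGraph.fromRel_adj])
    · by_cases huv : u = v
      · subst huv; exact iff_of_true (hbc u).symm (by simp [pentagon, SimpleGraph.fromRel_adj])
      · exact iff_of_false (fun h => hbcn v u (Ne.symm huv) h.symm)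
          (by simp [pentagon, SimpleGraph.fromRel_adj]; omega)
    · by_cases huv : u = v
      · subst huv; exact iff_of_false (Q.loopless.irrefl _) (by simp [pentagon, SimpleGraph.fromRel_adj])
      · exact iff_of_true (hcc u v huv) (by simp [pentagon, SimpleGraph.fromRel_adj, huv])
lemma djne {X Y : Set W} (hd : Disjoint X Y) {x y : W} (hx : x ∈ X) (hy : y ∈ Y) : x ≠ y :=
  fun he => Set.disjoint_left.mp hd hx (he ▸ hy)

lemma exists_third {t : ℕ} (ht : 3 ≤ t) (i j : Fin t) : ∃ k : Fin t, k ≠ i ∧ k ≠ j := by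
  by_contra h
  push_neg at h
  have hsub : (Finset.univ : Finset (Fin t)) ⊆ {i, j} := by
    intro k _
    simp only [Finset.mem_insert, Finset.mem_singleton]
    rcases eq_or_ne k i with h' | h'
    · exact Or.inl h'
    · exact Or.inr (h k h')
  have hc := Finset.card_le_card hsub
  have h2 : ({i, j} : Finset (Fin t)).card ≤ 2 :=
    le_trans (Finset.card_insert_le _ _) (by simp)
  simp only [Finset.card_univ, Fintype.card_fin] at hc
  omega

lemma exists_fourth {t : ℕ} (ht : 4 ≤ t) (i j k : Fin t) : ∃ l : Fin t, l ≠ i ∧ l ≠ j ∧ l ≠ k := by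
  by_contra h
  push_neg at h
  have hsub : (Finset.univ : Finset (Fin t)) ⊆ {i, j, k} := by
    intro l _
    simp only [Finset.mem_insert, Finset.mem_singleton]
    rcases eq_or_ne l i with h' | h'
    · exact Or.inl h'
    · rcases eq_or_ne l j with h'' | h''
      · exact Or.inr (Or.inl h'')
      · exact Or.inr (Or.inr (h l h' h''))
  have hc := Finset.card_le_card hsub
  have h2 : ({i, j, k} : Finset (Fin t)).card ≤ 3 :=
    le_trans (Finset.card_insert_le _ _) (by
      have := Finset.card_insert_le j ({k} : Finset (Fin t)); simp at this ⊢; omega)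
  simp only [Finset.card_univ, Fintype.card_fin] at hc
  omega

/-- In a finite chain (under inclusion) of sets indexed by a nonempty set `S`,
there is a maximal one. -/
lemma chain_top [Fintype W] {S : Set W} (hS : S.Nonempty) (g : W → Set W)
    (hchain : ∀ b ∈ S, ∀ b' ∈ S, g b ⊆ g b' ∨ g b' ⊆ g b) :
    ∃ b ∈ S, ∀ b' ∈ S, g b' ⊆ g b := by
  obtain ⟨b, hbS, hmax⟩ := Set.exists_max_image S (fun b => (g b).ncard) S.toFinite hS
  refine ⟨b, hbS, fun b' hb' => ?_⟩
  rcases hchain b' hb' b hbS with h | h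
  · exact h
  · have := hmax b' hb'
    have he := Set.eq_of_subset_of_ncard_le h this (Set.toFinite _)
    rw [he]

/-- If `b ∈ B i` has a non-neighbor in `C i`, then every `A`-neighbor of `b` is
complete to all `B l`, `l ≠ i`. -/
lemma lemL2 {t : ℕ} (ht : 3 ≤ t) [Fintype W] {Q : SimpleGraph W} {A : Set W} {B C : Fin t → Set W}
    (hframe : IsFramePartition Q A B C) (hp3 : IndFree Q twoP3)
    {i : Fin t} {b c' a : W} (hb : b ∈ B i) (hc' : c' ∈ C i) (hnbc : ¬ Q.Adj b c')
    (ha : a ∈ A) (hab : Q.Adj a b) :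
    ∀ l, l ≠ i → ∀ z ∈ B l, Q.Adj a z := by
  obtain ⟨hdAB, hdAC, hdBB, hdCC, hdBC, hUn, hAne, hBne, hCne, hA2, hAC, hBB, hCC, hBCa, hBA, hBC, hCB⟩ := hframe
  have key : ∀ (j : Fin t) (b2 : W), b2 ∈ B j → Q.Adj a b2 → j ≠ i →
      ∀ (k : Fin t), k ≠ i → k ≠ j → ∀ z ∈ B k, ¬ Q.Adj a z → False := by
    intro j b2 hb2 hab2 hji k hki hkj z hz hnaz
    obtain ⟨c3, hc3, hzc3⟩ := hBC k z hz
    -- 2P3 : (b - a - b2) and (c' - c3 - z)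
    exact no2P3 hp3 (w0 := b) (w1 := a) (w2 := b2) (w3 := c') (w4 := c3) (w5 := z)
      (h01 := hab.symm) (h12 := hab2) (h34 := hCC i k (fun h => hki h.symm) c' hc' c3 hc3)
      (h45 := hzc3.symm)
      (n02 := hBB i j (fun h => hji h.symm) b hb b2 hb2) (d02 := djne (hdBB i j (fun h => hji h.symm)) hb hb2)
      (n03 := hnbc) (d03 := djne (hdBC i i) hb hc')
      (n04 := hBCa i k (fun h => hki h.symm) b hb c3 hc3) (d04 := djne (hdBC i k) hb hc3)
      (n05 := hBB i k (fun h => hki h.symm) b hb z hz) (d05 := djne (hdBB i k (fun h => hki h.symm)) hb hz)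
      (n13 := hAC i a ha c' hc') (d13 := djne (hdAC i) ha hc')
      (n14 := hAC k a ha c3 hc3) (d14 := djne (hdAC k) ha hc3)
      (n15 := hnaz) (d15 := djne (hdAB k) ha hz)
      (n23 := hBCa j i hji b2 hb2 c' hc') (d23 := djne (hdBC j i) hb2 hc')
      (n24 := hBCa j k (fun h => hkj h.symm) b2 hb2 c3 hc3) (d24 := djne (hdBC j k) hb2 hc3)
      (n25 := hBB j k (fun h => hkj h.symm) b2 hb2 z hz) (d25 := djne (hdBB j k (fun h => hkj h.symm)) hb2 hz)
      (n35 := fun h => hBCa k i hki z hz c' hc' h.symm) (d35 := (djne (hdBC k i) hz hc').symm)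
  -- a has a neighbor in some class j ≠ i
  obtain ⟨i1, i2, h12, ⟨x1, hx1, hax1⟩, ⟨x2, hx2, hax2⟩⟩ := hA2 a ha
  obtain ⟨j, b2, hb2, hab2, hji⟩ : ∃ (j : Fin t) (b2 : W), b2 ∈ B j ∧ Q.Adj a b2 ∧ j ≠ i := by
    rcases eq_or_ne i1 i with h | h
    · exact ⟨i2, x2, hx2, hax2, h ▸ h12.symm⟩
    · exact ⟨i1, x1, hx1, hax1, h⟩
  intro l hl z hz
  by_contra hnaz
  rcases eq_or_ne l j with rfl | hlj
  · -- l = j : use a third class k and bootstrap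
    obtain ⟨k, hki, hkj⟩ := exists_third ht i l
    obtain ⟨b3, hb3⟩ := hBne k
    have hab3 : Q.Adj a b3 := by
      by_contra hn
      exact key l b2 hb2 hab2 hji k hki hkj b3 hb3 hn
    exact key k b3 hb3 hab3 hki l hl (fun h => hkj h.symm) z hz hnaz
  · exact key j b2 hb2 hab2 hji l hl hlj z hz hnaz

/-- Each `C i` is a clique. -/
lemma lemCclique {t : ℕ} (ht : 3 ≤ t) [Fintype W] {Q : SimpleGraph W} {A : Set W}
    {B C : Fin t → Set W} (hframe : IsFramePartition Q A B C)
    (hp3 : IndFree Q twoP3) (hc4 : IndFree Q (cycleG 4)) (hc6 : IndFree Q (cycleG 6))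
    (hc7 : IndFree Q (cycleG 7)) (ht0 : IndFree Q T0) :
    ∀ i, Q.IsClique (C i) := by
  obtain ⟨hdAB, hdAC, hdBB, hdCC, hdBC, hUn, hAne, hBne, hCne, hA2, hAC, hBB, hCC, hBCa, hBA, hBC, hCB⟩ := hframe
  have hframe' : IsFramePartition Q A B C :=
    ⟨hdAB, hdAC, hdBB, hdCC, hdBC, hUn, hAne, hBne, hCne, hA2, hAC, hBB, hCC, hBCa, hBA, hBC, hCB⟩
  intro i c hc c' hc' hne
  by_contra hncc
  obtain ⟨j, hji, -⟩ := exists_third ht i i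
  obtain ⟨c₂, hc₂⟩ := hCne j
  -- no common neighbor of c, c' in B i
  have hnocommon : ∀ b ∈ B i, Q.Adj b c → ¬ Q.Adj b c' := by
    intro b hb h1 h2
    exact noC4 hc4 (w0 := c) (w1 := b) (w2 := c') (w3 := c₂)
      (h01 := h1.symm) (h12 := h2) (h23 := hCC i j (fun h => hji h.symm) c' hc' c₂ hc₂)
      (h30 := hCC j i hji c₂ hc₂ c hc)
      (n02 := hncc) (n13 := hBCa i j (fun h => hji h.symm) b hb c₂ hc₂)
      (d02 := hne) (d13 := djne (hdBC i j) hb hc₂)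
  obtain ⟨b, hb, hcb⟩ := hCB i c hc
  obtain ⟨b', hb', hc'b'⟩ := hCB i c' hc'
  have hbc : Q.Adj b c := hcb.symm
  have hb'c' : Q.Adj b' c' := hc'b'.symm
  have hbc' : ¬ Q.Adj b c' := hnocommon b hb hbc
  have hb'c : ¬ Q.Adj b' c := fun h => hnocommon b' hb' h hb'c'
  have hbb'ne : b ≠ b' := fun h => hb'c (h ▸ hbc)
  by_cases hadj : Q.Adj b b'
  · -- b ~ b'
    obtain ⟨a, ha, hba⟩ := hBA i b hb
    have hab : Q.Adj a b := hba.symm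
    have hcomp : ∀ l, l ≠ i → ∀ z ∈ B l, Q.Adj a z :=
      lemL2 ht hframe' hp3 hb hc' hbc' ha hab
    obtain ⟨k, hki, hkj⟩ := exists_third ht i j
    obtain ⟨c₂', hc₂'⟩ := hCne j
    obtain ⟨b₂, hb₂, hc₂b₂⟩ := hCB j c₂' hc₂'
    obtain ⟨c₃, hc₃⟩ := hCne k
    obtain ⟨b₃, hb₃, hc₃b₃⟩ := hCB k c₃ hc₃
    have hab₂ : Q.Adj a b₂ := hcomp j hji b₂ hb₂
    have hab₃ : Q.Adj a b₃ := hcomp k hki b₃ hb₃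
    by_cases hab' : Q.Adj a b'
    · -- T0 : (c₂', c₃, b₂, b₃, c, c', a, b, b')
      exact noT0 ht0 (w0 := c₂') (w1 := c₃) (w2 := b₂) (w3 := b₃) (w4 := c) (w5 := c')
        (w6 := a) (w7 := b) (w8 := b')
        (h01 := hCC j k (fun h => hkj h.symm) c₂' hc₂' c₃ hc₃)
        (h02 := hc₂b₂) (h04 := hCC j i hji c₂' hc₂' c hc) (h05 := hCC j i hji c₂' hc₂' c' hc')
        (h13 := hc₃b₃) (h14 := hCC k i hki c₃ hc₃ c hc) (h15 := hCC k i hki c₃ hc₃ c' hc')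
        (h26 := hab₂.symm) (h36 := hab₃.symm) (h47 := hbc.symm) (h58 := hb'c'.symm)
        (h67 := hab) (h68 := hab') (h78 := hadj)
        (n03 := fun h => hBCa k j hkj b₃ hb₃ c₂' hc₂' h.symm) (d03 := (djne (hdBC k j) hb₃ hc₂').symm)
        (n06 := fun h => hAC j a ha c₂' hc₂' h.symm) (d06 := (djne (hdAC j) ha hc₂').symm)
        (n07 := fun h => hBCa i j (fun h' => hji h'.symm) b hb c₂' hc₂' h.symm) (d07 := (djne (hdBC i j) hb hc₂').symm)
        (n08 := fun h => hBCa i j (fun h' => hji h'.symm) b' hb' c₂' hc₂' h.symm) (d08 := (djne (hdBC i j) hb' hc₂').symm)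
        (n12 := fun h => hBCa j k (fun h' => hkj h'.symm) b₂ hb₂ c₃ hc₃ h.symm) (d12 := (djne (hdBC j k) hb₂ hc₃).symm)
        (n16 := fun h => hAC k a ha c₃ hc₃ h.symm) (d16 := (djne (hdAC k) ha hc₃).symm)
        (n17 := fun h => hBCa i k (fun h' => hki h'.symm) b hb c₃ hc₃ h.symm) (d17 := (djne (hdBC i k) hb hc₃).symm)
        (n18 := fun h => hBCa i k (fun h' => hki h'.symm) b' hb' c₃ hc₃ h.symm) (d18 := (djne (hdBC i k) hb' hc₃).symm)
        (n23 := hBB j k (fun h => hkj h.symm) b₂ hb₂ b₃ hb₃) (d23 := djne (hdBB j k (fun h => hkj h.symm)) hb₂ hb₃)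
        (n24 := hBCa j i hji b₂ hb₂ c hc) (d24 := djne (hdBC j i) hb₂ hc)
        (n25 := hBCa j i hji b₂ hb₂ c' hc') (d25 := djne (hdBC j i) hb₂ hc')
        (n27 := hBB j i hji b₂ hb₂ b hb) (d27 := djne (hdBB j i hji) hb₂ hb)
        (n28 := hBB j i hji b₂ hb₂ b' hb') (d28 := djne (hdBB j i hji) hb₂ hb')
        (n34 := hBCa k i hki b₃ hb₃ c hc) (d34 := djne (hdBC k i) hb₃ hc)
        (n35 := hBCa k i hki b₃ hb₃ c' hc') (d35 := djne (hdBC k i) hb₃ hc')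
        (n37 := hBB k i hki b₃ hb₃ b hb) (d37 := djne (hdBB k i hki) hb₃ hb)
        (n38 := hBB k i hki b₃ hb₃ b' hb') (d38 := djne (hdBB k i hki) hb₃ hb')
        (n45 := hncc) (d45 := hne)
        (n46 := fun h => hAC i a ha c hc h.symm) (d46 := (djne (hdAC i) ha hc).symm)
        (n48 := fun h => hb'c h.symm) (d48 := (djne (hdBC i i) hb' hc).symm)
        (n56 := fun h => hAC i a ha c' hc' h.symm) (d56 := (djne (hdAC i) ha hc').symm)
        (n57 := fun h => hbc' h.symm) (d57 := (djne (hdBC i i) hb hc').symm)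
    · -- C6 : (a, b, b', c', c₂', b₂)
      exact noC6 hc6 (w0 := a) (w1 := b) (w2 := b') (w3 := c') (w4 := c₂') (w5 := b₂)
        (h01 := hab) (h12 := hadj) (h23 := hb'c') (h34 := hCC i j (fun h => hji h.symm) c' hc' c₂' hc₂')
        (h45 := hc₂b₂) (h05 := hab₂)
        (n02 := hab') (d02 := djne (hdAB i) ha hb')
        (n03 := hAC i a ha c' hc') (d03 := djne (hdAC i) ha hc')
        (n04 := hAC j a ha c₂' hc₂') (d04 := djne (hdAC j) ha hc₂')
        (n13 := hbc') (d13 := djne (hdBC i i) hb hc')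
        (n14 := hBCa i j (fun h => hji h.symm) b hb c₂' hc₂') (d14 := djne (hdBC i j) hb hc₂')
        (n15 := hBB i j (fun h => hji h.symm) b hb b₂ hb₂) (d15 := djne (hdBB i j (fun h => hji h.symm)) hb hb₂)
        (n24 := hBCa i j (fun h => hji h.symm) b' hb' c₂' hc₂') (d24 := djne (hdBC i j) hb' hc₂')
        (n25 := hBB i j (fun h => hji h.symm) b' hb' b₂ hb₂) (d25 := djne (hdBB i j (fun h => hji h.symm)) hb' hb₂)
        (n35 := fun h => hBCa j i hji b₂ hb₂ c' hc' h.symm) (d35 := (djne (hdBC j i) hb₂ hc').symm)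
  · -- b and b' non-adjacent
    obtain ⟨a, ha, hba⟩ := hBA i b hb
    obtain ⟨a', ha', hb'a'⟩ := hBA i b' hb'
    have hab : Q.Adj a b := hba.symm
    have ha'b' : Q.Adj a' b' := hb'a'.symm
    have hab' : ¬ Q.Adj a b' := by
      intro h
      exact noC6 hc6 (w0 := a) (w1 := b) (w2 := c) (w3 := c₂) (w4 := c') (w5 := b')
        (h01 := hab) (h12 := hbc) (h23 := hCC i j (fun h' => hji h'.symm) c hc c₂ hc₂)
        (h34 := hCC j i hji c₂ hc₂ c' hc') (h45 := hc'b') (h05 := h)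
        (n02 := hAC i a ha c hc) (d02 := djne (hdAC i) ha hc)
        (n03 := hAC j a ha c₂ hc₂) (d03 := djne (hdAC j) ha hc₂)
        (n04 := hAC i a ha c' hc') (d04 := djne (hdAC i) ha hc')
        (n13 := hBCa i j (fun h' => hji h'.symm) b hb c₂ hc₂) (d13 := djne (hdBC i j) hb hc₂)
        (n14 := hbc') (d14 := djne (hdBC i i) hb hc')
        (n15 := hadj) (d15 := hbb'ne)
        (n24 := hncc) (d24 := hne)
        (n25 := fun h' => hb'c h'.symm) (d25 := (djne (hdBC i i) hb' hc).symm)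
        (n35 := fun h' => hBCa i j (fun h'' => hji h''.symm) b' hb' c₂ hc₂ h'.symm) (d35 := (djne (hdBC i j) hb' hc₂).symm)
    have ha'b : ¬ Q.Adj a' b := by
      intro h
      exact noC6 hc6 (w0 := a') (w1 := b') (w2 := c') (w3 := c₂) (w4 := c) (w5 := b)
        (h01 := ha'b') (h12 := hb'c') (h23 := hCC i j (fun h' => hji h'.symm) c' hc' c₂ hc₂)
        (h34 := hCC j i hji c₂ hc₂ c hc) (h45 := hcb) (h05 := h)
        (n02 := hAC i a' ha' c' hc') (d02 := djne (hdAC i) ha' hc')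
        (n03 := hAC j a' ha' c₂ hc₂) (d03 := djne (hdAC j) ha' hc₂)
        (n04 := hAC i a' ha' c hc) (d04 := djne (hdAC i) ha' hc)
        (n13 := hBCa i j (fun h' => hji h'.symm) b' hb' c₂ hc₂) (d13 := djne (hdBC i j) hb' hc₂)
        (n14 := hb'c) (d14 := djne (hdBC i i) hb' hc)
        (n15 := fun h' => hadj h'.symm) (d15 := hbb'ne.symm)
        (n24 := fun h' => hncc h'.symm) (d24 := hne.symm)
        (n25 := fun h' => hbc' h'.symm) (d25 := (djne (hdBC i i) hb hc').symm)
        (n35 := fun h' => hBCa i j (fun h'' => hji h''.symm) b hb c₂ hc₂ h'.symm) (d35 := (djne (hdBC i j) hb hc₂).symm)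
    have hane : a ≠ a' := fun h => ha'b (h ▸ hab)
    by_cases haa' : Q.Adj a a'
    · -- C7 : (a, b, c, c₂, c', b', a')
      exact noC7 hc7 (w0 := a) (w1 := b) (w2 := c) (w3 := c₂) (w4 := c') (w5 := b') (w6 := a')
        (h01 := hab) (h12 := hbc) (h23 := hCC i j (fun h => hji h.symm) c hc c₂ hc₂)
        (h34 := hCC j i hji c₂ hc₂ c' hc') (h45 := hc'b') (h56 := hb'a') (h06 := haa')
        (n02 := hAC i a ha c hc) (d02 := djne (hdAC i) ha hc)
        (n03 := hAC j a ha c₂ hc₂) (d03 := djne (hdAC j) ha hc₂)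
        (n04 := hAC i a ha c' hc') (d04 := djne (hdAC i) ha hc')
        (n05 := hab') (d05 := djne (hdAB i) ha hb')
        (n13 := hBCa i j (fun h => hji h.symm) b hb c₂ hc₂) (d13 := djne (hdBC i j) hb hc₂)
        (n14 := hbc') (d14 := djne (hdBC i i) hb hc')
        (n15 := hadj) (d15 := hbb'ne)
        (n16 := fun h => ha'b h.symm) (d16 := (djne (hdAB i) ha' hb).symm)
        (n24 := hncc) (d24 := hne)
        (n25 := fun h => hb'c h.symm) (d25 := (djne (hdBC i i) hb' hc).symm)
        (n26 := fun h => hAC i a' ha' c hc h.symm) (d26 := (djne (hdAC i) ha' hc).symm)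
        (n35 := fun h => hBCa i j (fun h' => hji h'.symm) b' hb' c₂ hc₂ h.symm) (d35 := (djne (hdBC i j) hb' hc₂).symm)
        (n36 := fun h => hAC j a' ha' c₂ hc₂ h.symm) (d36 := (djne (hdAC j) ha' hc₂).symm)
        (n46 := fun h => hAC i a' ha' c' hc' h.symm) (d46 := (djne (hdAC i) ha' hc').symm)
    · -- 2P3 : (a, b, c) and (a', b', c')
      exact no2P3 hp3 (w0 := a) (w1 := b) (w2 := c) (w3 := a') (w4 := b') (w5 := c')
        (h01 := hab) (h12 := hbc) (h34 := ha'b') (h45 := hb'c')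
        (n02 := hAC i a ha c hc) (d02 := djne (hdAC i) ha hc)
        (n03 := haa') (d03 := hane)
        (n04 := hab') (d04 := djne (hdAB i) ha hb')
        (n05 := hAC i a ha c' hc') (d05 := djne (hdAC i) ha hc')
        (n13 := fun h => ha'b h.symm) (d13 := (djne (hdAB i) ha' hb).symm)
        (n14 := hadj) (d14 := hbb'ne)
        (n15 := hbc') (d15 := djne (hdBC i i) hb hc')
        (n23 := fun h => hAC i a' ha' c hc h.symm) (d23 := (djne (hdAC i) ha' hc).symm)
        (n24 := fun h => hb'c h.symm) (d24 := (djne (hdBC i i) hb' hc).symm)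
        (n25 := hncc) (d25 := hne)
        (n35 := hAC i a' ha' c' hc') (d35 := djne (hdAC i) ha' hc')

/-- Each `B i` is a clique. -/
lemma lemBclique {t : ℕ} (ht : 3 ≤ t) [Fintype W] {Q : SimpleGraph W} {A : Set W}
    {B C : Fin t → Set W} (hframe : IsFramePartition Q A B C)
    (hp3 : IndFree Q twoP3) (hc4 : IndFree Q (cycleG 4)) (hc6 : IndFree Q (cycleG 6))
    (hc7 : IndFree Q (cycleG 7)) (ht0 : IndFree Q T0) (hpent : IndFree Q (pentagon (t+1))) :
    ∀ i, Q.IsClique (B i) := by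
  obtain ⟨hdAB, hdAC, hdBB, hdCC, hdBC, hUn, hAne, hBne, hCne, hA2, hAC, hBB, hCC, hBCa, hBA, hBC, hCB⟩ := hframe
  have hframe' : IsFramePartition Q A B C :=
    ⟨hdAB, hdAC, hdBB, hdCC, hdBC, hUn, hAne, hBne, hCne, hA2, hAC, hBB, hCC, hBCa, hBA, hBC, hCB⟩
  have hCcl := lemCclique ht hframe' hp3 hc4 hc6 hc7 ht0
  intro i b hb bb hbb hneb
  by_contra hnadj
  classical
  -- selection of a petal in each class
  have hselex : ∀ m : Fin t, ∃ p : W × W, p.1 ∈ B m ∧ p.2 ∈ C m ∧ Q.Adj p.1 p.2 := by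
    intro m
    obtain ⟨bm, hbm⟩ := hBne m
    obtain ⟨cm, hcm, hadj⟩ := hBC m bm hbm
    exact ⟨(bm, cm), hbm, hcm, hadj⟩
  choose sel hsel1 hsel2 hsel3 using hselex
  -- Step A : no common A-neighbor of b, bb
  have hnoA : ∀ a ∈ A, Q.Adj a b → Q.Adj a bb → False := by
    intro a ha hab habb0
    by_cases hcom : ∃ cx ∈ C i, Q.Adj b cx ∧ Q.Adj bb cx
    · obtain ⟨cx, hcx, h1, h2⟩ := hcom
      exact noC4 hc4 (w0 := a) (w1 := b) (w2 := cx) (w3 := bb)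
        (h01 := hab) (h12 := h1) (h23 := h2.symm) (h30 := habb0.symm)
        (n02 := hAC i a ha cx hcx) (n13 := hnadj)
        (d02 := djne (hdAC i) ha hcx) (d13 := hneb)
    · push_neg at hcom
      obtain ⟨c, hcC, hbc⟩ := hBC i b hb
      obtain ⟨cc, hccC, hbbcc⟩ := hBC i bb hbb
      have hbbc : ¬ Q.Adj bb c := hcom c hcC hbc
      have hbcc : ¬ Q.Adj b cc := fun h => hcom cc hccC h hbbcc
      have hcccne : c ≠ cc := fun h => hbcc (h ▸ hbc)
      have hccc : Q.Adj c cc := hCcl i hcC hccC hcccne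
      have hcomp : ∀ l, l ≠ i → ∀ z ∈ B l, Q.Adj a z :=
        lemL2 ht hframe' hp3 hb hccC hbcc ha hab
      -- pentagon construction
      set F : Fin (t+1) → W × W := fun l =>
        if h : (l : ℕ) < t then
          (if (⟨(l : ℕ), h⟩ : Fin t) = i then (b, c) else sel ⟨(l : ℕ), h⟩)
        else (bb, cc) with hFdef
      set cls : Fin (t+1) → Fin t := fun l =>
        if h : (l : ℕ) < t then (⟨(l : ℕ), h⟩ : Fin t) else i with hclsdef
      have hFval : ∀ l : Fin (t+1),
          (F l = (b, c) ∧ cls l = i) ∨ (F l = (bb, cc) ∧ cls l = i) ∨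
          (F l = sel (cls l) ∧ cls l ≠ i) := by
        intro l
        by_cases h : (l : ℕ) < t
        · by_cases h2 : (⟨(l : ℕ), h⟩ : Fin t) = i
          · left
            refine ⟨?_, ?_⟩
            · simp only [hFdef, dif_pos h, if_pos h2]
            · simp only [hclsdef, dif_pos h]; exact h2
          · right; right
            have hc : cls l = (⟨(l : ℕ), h⟩ : Fin t) := by simp only [hclsdef, dif_pos h]
            refine ⟨?_, ?_⟩
            · rw [hc]; simp only [hFdef, dif_pos h, if_neg h2]
            · rw [hc]; exact h2
        · right; left
          refine ⟨?_, ?_⟩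
          · simp only [hFdef, dif_neg h]
          · simp only [hclsdef, dif_neg h]
      have hFinj : ∀ l l' : Fin (t+1), l ≠ l' → cls l = cls l' →
          (F l = (b, c) ∧ F l' = (bb, cc)) ∨ (F l = (bb, cc) ∧ F l' = (b, c)) := by
        intro l l' hnell hcls
        by_cases h : (l : ℕ) < t <;> by_cases h' : (l' : ℕ) < t
        · exfalso
          have e1 : cls l = (⟨(l : ℕ), h⟩ : Fin t) := by simp only [hclsdef, dif_pos h]
          have e2 : cls l' = (⟨(l' : ℕ), h'⟩ : Fin t) := by simp only [hclsdef, dif_pos h']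
          rw [e1, e2] at hcls
          have : (l : ℕ) = (l' : ℕ) := by simpa using hcls
          exact hnell (Fin.ext this)
        · left
          have e2 : cls l' = i := by simp only [hclsdef, dif_neg h']
          have e1 : cls l = (⟨(l : ℕ), h⟩ : Fin t) := by simp only [hclsdef, dif_pos h]
          have h2 : (⟨(l : ℕ), h⟩ : Fin t) = i := by rw [← e1, hcls, e2]
          constructor
          · simp only [hFdef, dif_pos h, if_pos h2]
          · simp only [hFdef, dif_neg h']
        · right
          have e1 : cls l = i := by simp only [hclsdef, dif_neg h]
          have e2 : cls l' = (⟨(l' : ℕ), h'⟩ : Fin t) := by simp only [hclsdef, dif_pos h']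
          have h2 : (⟨(l' : ℕ), h'⟩ : Fin t) = i := by rw [← e2, ← hcls, e1]
          constructor
          · simp only [hFdef, dif_neg h]
          · simp only [hFdef, dif_pos h', if_pos h2]
        · exfalso
          have hl := l.isLt; have hl' := l'.isLt
          have : (l : ℕ) = (l' : ℕ) := by omega
          exact hnell (Fin.ext this)
      have hmem : ∀ l, (F l).1 ∈ B (cls l) ∧ (F l).2 ∈ C (cls l) ∧ Q.Adj (F l).1 (F l).2 := by
        intro l
        rcases hFval l with ⟨e, ec⟩ | ⟨e, ec⟩ | ⟨e, ec⟩
        · rw [e, ec]; exact ⟨hb, hcC, hbc⟩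
        · rw [e, ec]; exact ⟨hbb, hccC, hbbcc⟩
        · rw [e]; exact ⟨hsel1 _, hsel2 _, hsel3 _⟩
      refine noPentagon hpent a (fun l => (F l).1) (fun l => (F l).2)
        (fun l => ?_) (fun l => hAC (cls l) a ha _ (hmem l).2.1)
        (fun l => djne (hdAC (cls l)) ha (hmem l).2.1)
        (fun l => (hmem l).2.2) (fun l l' hne' => ?_)
        (fun l l' => djne (hdBC (cls l) (cls l')) (hmem l).1 (hmem l').2.1)
        (fun l l' hne' => ?_) (fun l l' hne' => ?_) (fun l l' hne' => ?_)
      · -- a adjacent to every (F l).1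
        show Q.Adj a (F l).1
        rcases hFval l with ⟨e, _⟩ | ⟨e, _⟩ | ⟨e, ec⟩
        · rw [e]; exact hab
        · rw [e]; exact habb0
        · rw [e]; exact hcomp (cls l) ec _ (hsel1 _)
      · -- no adjacency between (F l).1 and (F l').2 for l ≠ l'
        show ¬ Q.Adj (F l).1 (F l').2
        rcases eq_or_ne (cls l) (cls l') with he | he
        · rcases hFinj l l' hne' he with ⟨e1, e2⟩ | ⟨e1, e2⟩ <;> rw [e1, e2]
          · exact hbcc
          · exact hbbc
        · exact hBCa (cls l) (cls l') he _ (hmem l).1 _ (hmem l').2.1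
      · -- B parts pairwise non-adjacent
        show ¬ Q.Adj (F l).1 (F l').1
        rcases eq_or_ne (cls l) (cls l') with he | he
        · rcases hFinj l l' hne' he with ⟨e1, e2⟩ | ⟨e1, e2⟩ <;> rw [e1, e2]
          · exact hnadj
          · exact fun h => hnadj h.symm
        · exact hBB (cls l) (cls l') he _ (hmem l).1 _ (hmem l').1
      · -- B parts pairwise distinct
        show (F l).1 ≠ (F l').1
        rcases eq_or_ne (cls l) (cls l') with he | he
        · rcases hFinj l l' hne' he with ⟨e1, e2⟩ | ⟨e1, e2⟩ <;> rw [e1, e2]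
          · exact hneb
          · exact hneb.symm
        · exact djne (hdBB (cls l) (cls l') he) (hmem l).1 (hmem l').1
      · -- C parts pairwise adjacent
        show Q.Adj (F l).2 (F l').2
        rcases eq_or_ne (cls l) (cls l') with he | he
        · rcases hFinj l l' hne' he with ⟨e1, e2⟩ | ⟨e1, e2⟩ <;> rw [e1, e2]
          · exact hccc
          · exact hccc.symm
        · exact hCC (cls l) (cls l') he _ (hmem l).2.1 _ (hmem l').2.1
  -- Step B
  obtain ⟨a, ha, hba⟩ := hBA i b hb
  have hab : Q.Adj a b := hba.symm
  have habb : ¬ Q.Adj a bb := fun h => hnoA a ha hab h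
  obtain ⟨aa, haa, hbbaa⟩ := hBA i bb hbb
  have haabb : Q.Adj aa bb := hbbaa.symm
  have haab : ¬ Q.Adj aa b := fun h => hnoA aa haa h haabb
  have hane : a ≠ aa := fun h => haab (h ▸ hab)
  have hsecond : ∀ a' ∈ A, ∃ l, l ≠ i ∧ ∃ x ∈ B l, Q.Adj a' x := by
    intro a' ha'
    obtain ⟨i1, i2, h12, ⟨x1, hx1, hax1⟩, ⟨x2, hx2, hax2⟩⟩ := hA2 a' ha'
    rcases eq_or_ne i1 i with h | h
    · exact ⟨i2, h ▸ h12.symm, x2, hx2, hax2⟩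
    · exact ⟨i1, h, x1, hx1, hax1⟩
  obtain ⟨l, hl, x, hx, hax⟩ := hsecond a ha
  obtain ⟨m, hm, y, hy, haay⟩ := hsecond aa haa
  by_cases hcom : ∃ cx ∈ C i, Q.Adj b cx ∧ Q.Adj bb cx
  · obtain ⟨c, hcC, hbc, hbbc⟩ := hcom
    by_cases haa' : Q.Adj a aa
    · -- Case I.2
      have hstep : ∀ jj, jj ≠ i → ∀ b₂ ∈ B jj, Q.Adj a b₂ ∧ Q.Adj aa b₂ := by
        intro jj hjj b₂ hb₂
        obtain ⟨c₂, hc₂, hb₂c₂⟩ := hBC jj b₂ hb₂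
        obtain ⟨nn, hn1, hn2⟩ := exists_third ht i jj
        obtain ⟨cb, hcb⟩ := hCne nn
        have h1 : Q.Adj a b₂ := by
          by_contra hna
          by_cases h2 : Q.Adj aa b₂
          · exact noC6 hc6 (w0 := aa) (w1 := a) (w2 := b) (w3 := c) (w4 := c₂) (w5 := b₂)
              (h01 := haa'.symm) (h12 := hab) (h23 := hbc)
              (h34 := hCC i jj (fun h => hjj h.symm) c hcC c₂ hc₂) (h45 := hb₂c₂.symm) (h05 := h2)
              (n02 := haab) (d02 := djne (hdAB i) haa hb)
              (n03 := hAC i aa haa c hcC) (d03 := djne (hdAC i) haa hcC)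
              (n04 := hAC jj aa haa c₂ hc₂) (d04 := djne (hdAC jj) haa hc₂)
              (n13 := hAC i a ha c hcC) (d13 := djne (hdAC i) ha hcC)
              (n14 := hAC jj a ha c₂ hc₂) (d14 := djne (hdAC jj) ha hc₂)
              (n15 := hna) (d15 := djne (hdAB jj) ha hb₂)
              (n24 := hBCa i jj (fun h => hjj h.symm) b hb c₂ hc₂) (d24 := djne (hdBC i jj) hb hc₂)
              (n25 := hBB i jj (fun h => hjj h.symm) b hb b₂ hb₂) (d25 := djne (hdBB i jj (fun h => hjj h.symm)) hb hb₂)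
              (n35 := fun h => hBCa jj i hjj b₂ hb₂ c hcC h.symm) (d35 := (djne (hdBC jj i) hb₂ hcC).symm)
          · exact no2P3 hp3 (w0 := b) (w1 := a) (w2 := aa) (w3 := cb) (w4 := c₂) (w5 := b₂)
              (h01 := hba) (h12 := haa') (h34 := hCC nn jj hn2 cb hcb c₂ hc₂) (h45 := hb₂c₂.symm)
              (n02 := fun h => haab h.symm) (d02 := (djne (hdAB i) haa hb).symm)
              (n03 := hBCa i nn (fun h => hn1 h.symm) b hb cb hcb) (d03 := djne (hdBC i nn) hb hcb)
              (n04 := hBCa i jj (fun h => hjj h.symm) b hb c₂ hc₂) (d04 := djne (hdBC i jj) hb hc₂)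
              (n05 := hBB i jj (fun h => hjj h.symm) b hb b₂ hb₂) (d05 := djne (hdBB i jj (fun h => hjj h.symm)) hb hb₂)
              (n13 := hAC nn a ha cb hcb) (d13 := djne (hdAC nn) ha hcb)
              (n14 := hAC jj a ha c₂ hc₂) (d14 := djne (hdAC jj) ha hc₂)
              (n15 := hna) (d15 := djne (hdAB jj) ha hb₂)
              (n23 := hAC nn aa haa cb hcb) (d23 := djne (hdAC nn) haa hcb)
              (n24 := hAC jj aa haa c₂ hc₂) (d24 := djne (hdAC jj) haa hc₂)
              (n25 := h2) (d25 := djne (hdAB jj) haa hb₂)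
              (n35 := fun h => hBCa jj nn (fun h' => hn2 h'.symm) b₂ hb₂ cb hcb h.symm) (d35 := (djne (hdBC jj nn) hb₂ hcb).symm)
        have h2 : Q.Adj aa b₂ := by
          by_contra hnaa
          exact noC6 hc6 (w0 := a) (w1 := aa) (w2 := bb) (w3 := c) (w4 := c₂) (w5 := b₂)
            (h01 := haa') (h12 := haabb) (h23 := hbbc)
            (h34 := hCC i jj (fun h => hjj h.symm) c hcC c₂ hc₂) (h45 := hb₂c₂.symm) (h05 := h1)
            (n02 := habb) (d02 := djne (hdAB i) ha hbb)
            (n03 := hAC i a ha c hcC) (d03 := djne (hdAC i) ha hcC)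
            (n04 := hAC jj a ha c₂ hc₂) (d04 := djne (hdAC jj) ha hc₂)
            (n13 := hAC i aa haa c hcC) (d13 := djne (hdAC i) haa hcC)
            (n14 := hAC jj aa haa c₂ hc₂) (d14 := djne (hdAC jj) haa hc₂)
            (n15 := hnaa) (d15 := djne (hdAB jj) haa hb₂)
            (n24 := hBCa i jj (fun h => hjj h.symm) bb hbb c₂ hc₂) (d24 := djne (hdBC i jj) hbb hc₂)
            (n25 := hBB i jj (fun h => hjj h.symm) bb hbb b₂ hb₂) (d25 := djne (hdBB i jj (fun h => hjj h.symm)) hbb hb₂)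
            (n35 := fun h => hBCa jj i hjj b₂ hb₂ c hcC h.symm) (d35 := (djne (hdBC jj i) hb₂ hcC).symm)
        exact ⟨h1, h2⟩
      obtain ⟨jj, hjji, -⟩ := exists_third ht i i
      obtain ⟨kk, hkki, hkkj⟩ := exists_third ht i jj
      obtain ⟨b₂, hb₂⟩ := hBne jj
      obtain ⟨c₂, hc₂, hb₂c₂⟩ := hBC jj b₂ hb₂
      obtain ⟨b₃, hb₃⟩ := hBne kk
      obtain ⟨c₃, hc₃, hb₃c₃⟩ := hBC kk b₃ hb₃
      exact noT0 ht0 (w0 := a) (w1 := aa) (w2 := b) (w3 := bb) (w4 := b₂) (w5 := b₃)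
        (w6 := c) (w7 := c₂) (w8 := c₃)
        (h01 := haa') (h02 := hab) (h04 := (hstep jj hjji b₂ hb₂).1) (h05 := (hstep kk hkki b₃ hb₃).1)
        (h13 := haabb) (h14 := (hstep jj hjji b₂ hb₂).2) (h15 := (hstep kk hkki b₃ hb₃).2)
        (h26 := hbc) (h36 := hbbc) (h47 := hb₂c₂) (h58 := hb₃c₃)
        (h67 := hCC i jj (fun h => hjji h.symm) c hcC c₂ hc₂)
        (h68 := hCC i kk (fun h => hkki h.symm) c hcC c₃ hc₃)
        (h78 := hCC jj kk (fun h => hkkj h.symm) c₂ hc₂ c₃ hc₃)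
        (n03 := habb) (d03 := djne (hdAB i) ha hbb)
        (n06 := hAC i a ha c hcC) (d06 := djne (hdAC i) ha hcC)
        (n07 := hAC jj a ha c₂ hc₂) (d07 := djne (hdAC jj) ha hc₂)
        (n08 := hAC kk a ha c₃ hc₃) (d08 := djne (hdAC kk) ha hc₃)
        (n12 := haab) (d12 := djne (hdAB i) haa hb)
        (n16 := hAC i aa haa c hcC) (d16 := djne (hdAC i) haa hcC)
        (n17 := hAC jj aa haa c₂ hc₂) (d17 := djne (hdAC jj) haa hc₂)
        (n18 := hAC kk aa haa c₃ hc₃) (d18 := djne (hdAC kk) haa hc₃)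
        (n23 := hnadj) (d23 := hneb)
        (n24 := hBB i jj (fun h => hjji h.symm) b hb b₂ hb₂) (d24 := djne (hdBB i jj (fun h => hjji h.symm)) hb hb₂)
        (n25 := hBB i kk (fun h => hkki h.symm) b hb b₃ hb₃) (d25 := djne (hdBB i kk (fun h => hkki h.symm)) hb hb₃)
        (n27 := hBCa i jj (fun h => hjji h.symm) b hb c₂ hc₂) (d27 := djne (hdBC i jj) hb hc₂)
        (n28 := hBCa i kk (fun h => hkki h.symm) b hb c₃ hc₃) (d28 := djne (hdBC i kk) hb hc₃)
        (n34 := hBB i jj (fun h => hjji h.symm) bb hbb b₂ hb₂) (d34 := djne (hdBB i jj (fun h => hjji h.symm)) hbb hb₂)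
        (n35 := hBB i kk (fun h => hkki h.symm) bb hbb b₃ hb₃) (d35 := djne (hdBB i kk (fun h => hkki h.symm)) hbb hb₃)
        (n37 := hBCa i jj (fun h => hjji h.symm) bb hbb c₂ hc₂) (d37 := djne (hdBC i jj) hbb hc₂)
        (n38 := hBCa i kk (fun h => hkki h.symm) bb hbb c₃ hc₃) (d38 := djne (hdBC i kk) hbb hc₃)
        (n45 := hBB jj kk (fun h => hkkj h.symm) b₂ hb₂ b₃ hb₃) (d45 := djne (hdBB jj kk (fun h => hkkj h.symm)) hb₂ hb₃)
        (n46 := hBCa jj i hjji b₂ hb₂ c hcC) (d46 := djne (hdBC jj i) hb₂ hcC)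
        (n48 := hBCa jj kk (fun h => hkkj h.symm) b₂ hb₂ c₃ hc₃) (d48 := djne (hdBC jj kk) hb₂ hc₃)
        (n56 := hBCa kk i hkki b₃ hb₃ c hcC) (d56 := djne (hdBC kk i) hb₃ hcC)
        (n57 := hBCa kk jj hkkj b₃ hb₃ c₂ hc₂) (d57 := djne (hdBC kk jj) hb₃ hc₂)
    · -- Case I.1 : a and aa non-adjacent, common neighbor c
      by_cases h1 : Q.Adj x aa
      · exact noC6 hc6 (w0 := x) (w1 := a) (w2 := b) (w3 := c) (w4 := bb) (w5 := aa)
          (h01 := hax.symm) (h12 := hab) (h23 := hbc) (h34 := hbbc.symm) (h45 := hbbaa) (h05 := h1)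
          (n02 := hBB l i hl x hx b hb) (d02 := djne (hdBB l i hl) hx hb)
          (n03 := hBCa l i hl x hx c hcC) (d03 := djne (hdBC l i) hx hcC)
          (n04 := hBB l i hl x hx bb hbb) (d04 := djne (hdBB l i hl) hx hbb)
          (n13 := hAC i a ha c hcC) (d13 := djne (hdAC i) ha hcC)
          (n14 := habb) (d14 := djne (hdAB i) ha hbb)
          (n15 := haa') (d15 := hane)
          (n24 := hnadj) (d24 := hneb)
          (n25 := fun h => haab h.symm) (d25 := (djne (hdAB i) haa hb).symm)
          (n35 := fun h => hAC i aa haa c hcC h.symm) (d35 := (djne (hdAC i) haa hcC).symm)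
      · by_cases h2 : Q.Adj a y
        · exact noC6 hc6 (w0 := a) (w1 := y) (w2 := aa) (w3 := bb) (w4 := c) (w5 := b)
            (h01 := h2) (h12 := haay.symm) (h23 := haabb) (h34 := hbbc) (h45 := hbc.symm) (h05 := hab)
            (n02 := haa') (d02 := hane)
            (n03 := habb) (d03 := djne (hdAB i) ha hbb)
            (n04 := hAC i a ha c hcC) (d04 := djne (hdAC i) ha hcC)
            (n13 := hBB m i hm y hy bb hbb) (d13 := djne (hdBB m i hm) hy hbb)
            (n14 := hBCa m i hm y hy c hcC) (d14 := djne (hdBC m i) hy hcC)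
            (n15 := hBB m i hm y hy b hb) (d15 := djne (hdBB m i hm) hy hb)
            (n24 := hAC i aa haa c hcC) (d24 := djne (hdAC i) haa hcC)
            (n25 := haab) (d25 := djne (hdAB i) haa hb)
            (n35 := fun h => hnadj h.symm) (d35 := hneb.symm)
        · by_cases h3 : Q.Adj x y
          · exact noC7 hc7 (w0 := b) (w1 := a) (w2 := x) (w3 := y) (w4 := aa) (w5 := bb) (w6 := c)
              (h01 := hba) (h12 := hax) (h23 := h3) (h34 := haay.symm) (h45 := haabb) (h56 := hbbc) (h06 := hbc)
              (n02 := hBB i l (fun h => hl h.symm) b hb x hx) (d02 := djne (hdBB i l (fun h => hl h.symm)) hb hx)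
              (n03 := hBB i m (fun h => hm h.symm) b hb y hy) (d03 := djne (hdBB i m (fun h => hm h.symm)) hb hy)
              (n04 := fun h => haab h.symm) (d04 := (djne (hdAB i) haa hb).symm)
              (n05 := hnadj) (d05 := hneb)
              (n13 := h2) (d13 := djne (hdAB m) ha hy)
              (n14 := haa') (d14 := hane)
              (n15 := habb) (d15 := djne (hdAB i) ha hbb)
              (n16 := hAC i a ha c hcC) (d16 := djne (hdAC i) ha hcC)
              (n24 := h1) (d24 := (djne (hdAB l) haa hx).symm)
              (n25 := hBB l i hl x hx bb hbb) (d25 := djne (hdBB l i hl) hx hbb)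
              (n26 := hBCa l i hl x hx c hcC) (d26 := djne (hdBC l i) hx hcC)
              (n35 := hBB m i hm y hy bb hbb) (d35 := djne (hdBB m i hm) hy hbb)
              (n36 := hBCa m i hm y hy c hcC) (d36 := djne (hdBC m i) hy hcC)
              (n46 := hAC i aa haa c hcC) (d46 := djne (hdAC i) haa hcC)
          · exact no2P3 hp3 (w0 := x) (w1 := a) (w2 := b) (w3 := y) (w4 := aa) (w5 := bb)
              (h01 := hax.symm) (h12 := hab) (h34 := haay.symm) (h45 := haabb)
              (n02 := hBB l i hl x hx b hb) (d02 := djne (hdBB l i hl) hx hb)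
              (n03 := h3) (d03 := fun hxy => h2 (hxy ▸ hax))
              (n04 := h1) (d04 := (djne (hdAB l) haa hx).symm)
              (n05 := hBB l i hl x hx bb hbb) (d05 := djne (hdBB l i hl) hx hbb)
              (n13 := h2) (d13 := djne (hdAB m) ha hy)
              (n14 := haa') (d14 := hane)
              (n15 := habb) (d15 := djne (hdAB i) ha hbb)
              (n23 := fun h => hBB m i hm y hy b hb h.symm) (d23 := (djne (hdBB m i hm) hy hb).symm)
              (n24 := fun h => haab h.symm) (d24 := (djne (hdAB i) haa hb).symm)
              (n25 := hnadj) (d25 := hneb)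
              (n35 := hBB m i hm y hy bb hbb) (d35 := djne (hdBB m i hm) hy hbb)
  · -- Case II : no common neighbor in C i
    push_neg at hcom
    obtain ⟨c, hcC, hbc⟩ := hBC i b hb
    obtain ⟨cc, hccC, hbbcc⟩ := hBC i bb hbb
    have hbbc : ¬ Q.Adj bb c := hcom c hcC hbc
    have hbcc : ¬ Q.Adj b cc := fun h => hcom cc hccC h hbbcc
    have hcccne : c ≠ cc := fun h => hbcc (h ▸ hbc)
    have hccc : Q.Adj c cc := hCcl i hcC hccC hcccne
    by_cases haa' : Q.Adj a aa
    · exact noC6 hc6 (w0 := a) (w1 := b) (w2 := c) (w3 := cc) (w4 := bb) (w5 := aa)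
        (h01 := hab) (h12 := hbc) (h23 := hccc) (h34 := hbbcc.symm) (h45 := hbbaa) (h05 := haa')
        (n02 := hAC i a ha c hcC) (d02 := djne (hdAC i) ha hcC)
        (n03 := hAC i a ha cc hccC) (d03 := djne (hdAC i) ha hccC)
        (n04 := habb) (d04 := djne (hdAB i) ha hbb)
        (n13 := hbcc) (d13 := djne (hdBC i i) hb hccC)
        (n14 := hnadj) (d14 := hneb)
        (n15 := fun h => haab h.symm) (d15 := (djne (hdAB i) haa hb).symm)
        (n24 := fun h => hbbc h.symm) (d24 := (djne (hdBC i i) hbb hcC).symm)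
        (n25 := fun h => hAC i aa haa c hcC h.symm) (d25 := (djne (hdAC i) haa hcC).symm)
        (n35 := fun h => hAC i aa haa cc hccC h.symm) (d35 := (djne (hdAC i) haa hccC).symm)
    · by_cases h1 : Q.Adj x aa
      · exact noC7 hc7 (w0 := x) (w1 := a) (w2 := b) (w3 := c) (w4 := cc) (w5 := bb) (w6 := aa)
          (h01 := hax.symm) (h12 := hab) (h23 := hbc) (h34 := hccc) (h45 := hbbcc.symm) (h56 := hbbaa) (h06 := h1)
          (n02 := hBB l i hl x hx b hb) (d02 := djne (hdBB l i hl) hx hb)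
          (n03 := hBCa l i hl x hx c hcC) (d03 := djne (hdBC l i) hx hcC)
          (n04 := hBCa l i hl x hx cc hccC) (d04 := djne (hdBC l i) hx hccC)
          (n05 := hBB l i hl x hx bb hbb) (d05 := djne (hdBB l i hl) hx hbb)
          (n13 := hAC i a ha c hcC) (d13 := djne (hdAC i) ha hcC)
          (n14 := hAC i a ha cc hccC) (d14 := djne (hdAC i) ha hccC)
          (n15 := habb) (d15 := djne (hdAB i) ha hbb)
          (n16 := haa') (d16 := hane)
          (n24 := hbcc) (d24 := djne (hdBC i i) hb hccC)
          (n25 := hnadj) (d25 := hneb)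
          (n26 := fun h => haab h.symm) (d26 := (djne (hdAB i) haa hb).symm)
          (n35 := fun h => hbbc h.symm) (d35 := (djne (hdBC i i) hbb hcC).symm)
          (n36 := fun h => hAC i aa haa c hcC h.symm) (d36 := (djne (hdAC i) haa hcC).symm)
          (n46 := fun h => hAC i aa haa cc hccC h.symm) (d46 := (djne (hdAC i) haa hccC).symm)
      · exact no2P3 hp3 (w0 := x) (w1 := a) (w2 := b) (w3 := aa) (w4 := bb) (w5 := cc)
          (h01 := hax.symm) (h12 := hab) (h34 := haabb) (h45 := hbbcc)
          (n02 := hBB l i hl x hx b hb) (d02 := djne (hdBB l i hl) hx hb)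
          (n03 := h1) (d03 := (djne (hdAB l) haa hx).symm)
          (n04 := hBB l i hl x hx bb hbb) (d04 := djne (hdBB l i hl) hx hbb)
          (n05 := hBCa l i hl x hx cc hccC) (d05 := djne (hdBC l i) hx hccC)
          (n13 := haa') (d13 := hane)
          (n14 := habb) (d14 := djne (hdAB i) ha hbb)
          (n15 := hAC i a ha cc hccC) (d15 := djne (hdAC i) ha hccC)
          (n23 := fun h => haab h.symm) (d23 := (djne (hdAB i) haa hb).symm)
          (n24 := hnadj) (d24 := hneb)
          (n25 := hbcc) (d25 := djne (hdBC i i) hb hccC)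
          (n35 := hAC i aa haa cc hccC) (d35 := djne (hdAC i) haa hccC)

lemma lemVilla {t : ℕ} (ht : 3 ≤ t) [Fintype W] {Q : SimpleGraph W} {A : Set W}
    {B C : Fin t → Set W} (hframe : IsFramePartition Q A B C)
    (hp3 : IndFree Q twoP3) (hc4 : IndFree Q (cycleG 4)) (hc6 : IndFree Q (cycleG 6))
    (hc7 : IndFree Q (cycleG 7)) (ht0 : IndFree Q T0) (hpent : IndFree Q (pentagon (t+1)))
    (hAB : CompleteTo Q A (⋃ i, B i)) : IsVillaPartition Q A B C := by
  have hBcl := lemBclique ht hframe hp3 hc4 hc6 hc7 ht0 hpent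
  have hCcl := lemCclique ht hframe hp3 hc4 hc6 hc7 ht0
  obtain ⟨hdAB, hdAC, hdBB, hdCC, hdBC, hUn, hAne, hBne, hCne, hA2, hAC, hBB, hCC, hBCa, hBA, hBC, hCB⟩ := hframe
  have hABi : ∀ i, ∀ a ∈ A, ∀ b ∈ B i, Q.Adj a b := by
    intro i a ha b hb
    exact hAB a ha b (Set.mem_iUnion.mpr ⟨i, hb⟩)
  have hAcl : Q.IsClique A := by
    intro a ha a' ha' hne
    by_contra hn
    have h01 : (⟨0, by omega⟩ : Fin t) ≠ (⟨1, by omega⟩ : Fin t) := by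
      intro h; simpa using congrArg Fin.val h
    obtain ⟨b0, hb0⟩ := hBne ⟨0, by omega⟩
    obtain ⟨b1, hb1⟩ := hBne ⟨1, by omega⟩
    exact noC4 hc4 (w0 := a) (w1 := b0) (w2 := a') (w3 := b1)
      (h01 := hABi _ a ha b0 hb0) (h12 := (hABi _ a' ha' b0 hb0).symm)
      (h23 := hABi _ a' ha' b1 hb1) (h30 := (hABi _ a ha b1 hb1).symm)
      (n02 := hn) (n13 := hBB _ _ h01 b0 hb0 b1 hb1)
      (d02 := hne) (d13 := djne (hdBB _ _ h01) hb0 hb1)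
  have hNest : ∀ i, ∀ b ∈ B i, ∀ b' ∈ B i,
      Q.neighborSet b ∩ C i ⊆ Q.neighborSet b' ∩ C i ∨
      Q.neighborSet b' ∩ C i ⊆ Q.neighborSet b ∩ C i := by
    intro i b hb b' hb'
    by_contra hcon
    push_neg at hcon
    obtain ⟨h1, h2⟩ := hcon
    obtain ⟨c, hcmem, hcnot⟩ := Set.not_subset.mp h1
    obtain ⟨c', hc'mem, hc'not⟩ := Set.not_subset.mp h2
    have hbc : Q.Adj b c := hcmem.1
    have hcC : c ∈ C i := hcmem.2
    have hb'c' : Q.Adj b' c' := hc'mem.1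
    have hc'C : c' ∈ C i := hc'mem.2
    have hnb'c : ¬ Q.Adj b' c := fun h => hcnot ⟨h, hcC⟩
    have hnbc' : ¬ Q.Adj b c' := fun h => hc'not ⟨h, hc'C⟩
    have hccne : c ≠ c' := fun h => hnbc' (h ▸ hbc)
    have hbbne : b ≠ b' := fun h => hnb'c (h ▸ hbc)
    exact noC4 hc4 (w0 := b) (w1 := c) (w2 := c') (w3 := b')
      (h01 := hbc) (h12 := hCcl i hcC hc'C hccne) (h23 := hb'c'.symm)
      (h30 := hBcl i hb' hb hbbne.symm)
      (n02 := hnbc') (n13 := fun h => hnb'c h.symm)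
      (d02 := djne (hdBC i i) hb hc'C) (d13 := (djne (hdBC i i) hb' hcC).symm)
  refine ⟨⟨hdAB, hdAC, hdBB, hdCC, hdBC, hAcl, hBcl, hCcl, hAne, hBne, hCne,
    (fun i a ha b hb => hABi i a ha b hb), hAC, hBB, hCC, hBCa, hNest, ?_, ?_⟩, hUn⟩
  · intro i b hb
    obtain ⟨c, hc, hbc⟩ := hBC i b hb
    exact ⟨c, hbc, hc⟩
  · intro i
    obtain ⟨b, hbB, hmax⟩ := chain_top (hBne i) (fun b => Q.neighborSet b ∩ C i)
      (fun b hb b' hb' => hNest i b hb b' hb')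
    refine ⟨b, hbB, fun c hc => ?_⟩
    obtain ⟨bc, hbc, hcbc⟩ := hCB i c hc
    exact (hmax bc hbc ⟨hcbc.symm, hc⟩).1

lemma lemT3 {t : ℕ} (ht : 3 ≤ t) [Fintype W] {Q : SimpleGraph W} {A : Set W}
    {B C : Fin t → Set W} (hframe : IsFramePartition Q A B C)
    (hp3 : IndFree Q twoP3) (hnAB : ¬ CompleteTo Q A (⋃ i, B i)) : t = 3 := by
  obtain ⟨hdAB, hdAC, hdBB, hdCC, hdBC, hUn, hAne, hBne, hCne, hA2, hAC, hBB, hCC, hBCa, hBA, hBC, hCB⟩ := hframe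
  by_contra hne3
  have ht4 : 4 ≤ t := by omega
  simp only [CompleteTo, Set.mem_iUnion, not_forall] at hnAB
  obtain ⟨a, ha, bx, hbxU, hnab⟩ := hnAB
  obtain ⟨i0, hbx⟩ := hbxU
  have key : ∀ (mm ii jj : Fin t) (b x y : W), mm ≠ ii → mm ≠ jj → ii ≠ jj →
      b ∈ B mm → x ∈ B ii → y ∈ B jj → ¬ Q.Adj a b → Q.Adj a x → Q.Adj a y → False := by
    intro mm ii jj b x y hmi hmj hij hbB hxB hyB hnab' hax hay
    obtain ⟨ll, hl1, hl2, hl3⟩ := exists_fourth ht4 mm ii jj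
    obtain ⟨cm, hcm, hbcm⟩ := hBC mm b hbB
    obtain ⟨cl, hcl⟩ := hCne ll
    exact no2P3 hp3 (w0 := x) (w1 := a) (w2 := y) (w3 := b) (w4 := cm) (w5 := cl)
      (h01 := hax.symm) (h12 := hay)
      (h34 := hbcm) (h45 := hCC mm ll (fun h => hl1 h.symm) cm hcm cl hcl)
      (n02 := hBB ii jj hij x hxB y hyB) (d02 := djne (hdBB ii jj hij) hxB hyB)
      (n03 := hBB ii mm (fun h => hmi h.symm) x hxB b hbB) (d03 := djne (hdBB ii mm (fun h => hmi h.symm)) hxB hbB)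
      (n04 := hBCa ii mm (fun h => hmi h.symm) x hxB cm hcm) (d04 := djne (hdBC ii mm) hxB hcm)
      (n05 := hBCa ii ll (fun h => hl2 h.symm) x hxB cl hcl) (d05 := djne (hdBC ii ll) hxB hcl)
      (n13 := hnab') (d13 := djne (hdAB mm) ha hbB)
      (n14 := hAC mm a ha cm hcm) (d14 := djne (hdAC mm) ha hcm)
      (n15 := hAC ll a ha cl hcl) (d15 := djne (hdAC ll) ha hcl)
      (n23 := hBB jj mm (fun h => hmj h.symm) y hyB b hbB) (d23 := djne (hdBB jj mm (fun h => hmj h.symm)) hyB hbB)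
      (n24 := hBCa jj mm (fun h => hmj h.symm) y hyB cm hcm) (d24 := djne (hdBC jj mm) hyB hcm)
      (n25 := hBCa jj ll (fun h => hl3 h.symm) y hyB cl hcl) (d25 := djne (hdBC jj ll) hyB hcl)
      (n35 := hBCa mm ll (fun h => hl1 h.symm) b hbB cl hcl) (d35 := djne (hdBC mm ll) hbB hcl)
  obtain ⟨p, q, hpq, ⟨x, hx, hax⟩, ⟨y, hy, hay⟩⟩ := hA2 a ha
  rcases eq_or_ne i0 p with rfl | hp
  · -- bx and x in the same class i0 ; pick a third class k ∉ {i0, q}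
    obtain ⟨k, hk1, hk2⟩ := exists_third ht i0 q
    obtain ⟨z, hz⟩ := hBne k
    by_cases haz : Q.Adj a z
    · exact key i0 k q bx z y (fun h => hk1 h.symm) hpq hk2 hbx hz hy hnab haz hay
    · exact key k i0 q z x y hk1 hk2 hpq hz hx hy haz hax hay
  · rcases eq_or_ne i0 q with rfl | hq
    · obtain ⟨k, hk1, hk2⟩ := exists_third ht i0 p
      obtain ⟨z, hz⟩ := hBne k
      by_cases haz : Q.Adj a z
      · exact key i0 k p bx z x (fun h => hk1 h.symm) hp hk2 hbx hz hx hnab haz hax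
      · exact key k i0 p z y x hk1 hk2 hp hz hy hx haz hay hax
    · exact key i0 p q bx x y hp hq hpq hbx hx hy hnab hax hay

lemma lemQA {t : ℕ} (ht : 3 ≤ t) [Fintype W] {Q : SimpleGraph W} {A : Set W}
    {B C : Fin t → Set W} (hframe : IsFramePartition Q A B C)
    (hp3 : IndFree Q twoP3) {p m : Fin t} (hmp : m ≠ p) {a x xb z : W}
    (ha : a ∈ A) (hx : x ∈ B p) (hxb : xb ∈ B p) (hz : z ∈ B m)
    (hax : Q.Adj a x) (hnaxb : ¬ Q.Adj a xb) (hxxb : Q.Adj x xb)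
    (hnaz : ¬ Q.Adj a z) : False := by
  obtain ⟨hdAB, hdAC, hdBB, hdCC, hdBC, hUn, hAne, hBne, hCne, hA2, hAC, hBB, hCC, hBCa, hBA, hBC, hCB⟩ := hframe
  obtain ⟨k, hk1, hk2⟩ := exists_third ht p m
  obtain ⟨cm, hcm, hzcm⟩ := hBC m z hz
  obtain ⟨ck, hck⟩ := hCne k
  exact no2P3 hp3 (w0 := a) (w1 := x) (w2 := xb) (w3 := z) (w4 := cm) (w5 := ck)
    (h01 := hax) (h12 := hxxb) (h34 := hzcm) (h45 := hCC m k (fun h => hk2 h.symm) cm hcm ck hck)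
    (n02 := hnaxb) (d02 := djne (hdAB p) ha hxb)
    (n03 := hnaz) (d03 := djne (hdAB m) ha hz)
    (n04 := hAC m a ha cm hcm) (d04 := djne (hdAC m) ha hcm)
    (n05 := hAC k a ha ck hck) (d05 := djne (hdAC k) ha hck)
    (n13 := hBB p m (fun h => hmp h.symm) x hx z hz) (d13 := djne (hdBB p m (fun h => hmp h.symm)) hx hz)
    (n14 := hBCa p m (fun h => hmp h.symm) x hx cm hcm) (d14 := djne (hdBC p m) hx hcm)
    (n15 := hBCa p k (fun h => hk1 h.symm) x hx ck hck) (d15 := djne (hdBC p k) hx hck)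
    (n23 := hBB p m (fun h => hmp h.symm) xb hxb z hz) (d23 := djne (hdBB p m (fun h => hmp h.symm)) hxb hz)
    (n24 := hBCa p m (fun h => hmp h.symm) xb hxb cm hcm) (d24 := djne (hdBC p m) hxb hcm)
    (n25 := hBCa p k (fun h => hk1 h.symm) xb hxb ck hck) (d25 := djne (hdBC p k) hxb hck)
    (n35 := hBCa m k (fun h => hk2 h.symm) z hz ck hck) (d35 := djne (hdBC m k) hz hck)

/-- At `t = 3`, a vertex of `A` with a non-neighbor in `B i` is complete to `B j` for `j ≠ i`. -/
lemma lemMiss1 {t : ℕ} (ht : 3 ≤ t) (ht3 : t = 3) [Fintype W] {Q : SimpleGraph W} {A : Set W}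
    {B C : Fin t → Set W} (hframe : IsFramePartition Q A B C)
    (hp3 : IndFree Q twoP3) (hBcl : ∀ i, Q.IsClique (B i)) :
    ∀ a ∈ A, ∀ (i j : Fin t), i ≠ j → ∀ b ∈ B i, ¬ Q.Adj a b → ∀ z ∈ B j, Q.Adj a z := by
  intro a ha i j hij b hb hnab z hz
  by_contra hnaz
  obtain ⟨p, q, hpq, ⟨x, hx, hax⟩, ⟨y, hy, hay⟩⟩ := hframe.2.2.2.2.2.2.2.2.2.1 a ha
  have hval : p = i ∨ p = j ∨ q = i ∨ q = j := by
    by_contra hcon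
    push_neg at hcon
    obtain ⟨h1, h2, h3, h4⟩ := hcon
    have e1 : (p : ℕ) ≠ (q : ℕ) := fun h => hpq (Fin.ext h)
    have e2 : (i : ℕ) ≠ (j : ℕ) := fun h => hij (Fin.ext h)
    have e3 : (p : ℕ) ≠ (i : ℕ) := fun h => h1 (Fin.ext h)
    have e4 : (p : ℕ) ≠ (j : ℕ) := fun h => h2 (Fin.ext h)
    have e5 : (q : ℕ) ≠ (i : ℕ) := fun h => h3 (Fin.ext h)
    have e6 : (q : ℕ) ≠ (j : ℕ) := fun h => h4 (Fin.ext h)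
    have b1 := p.isLt; have b2 := q.isLt; have b3 := i.isLt; have b4 := j.isLt
    omega
  rcases hval with rfl | rfl | rfl | rfl
  · have hxb : x ≠ b := fun h => hnab (h ▸ hax)
    exact lemQA ht hframe hp3 (p := p) (m := j) hij.symm ha hx hb hz hax hnab
      (hBcl p hx hb hxb) hnaz
  · have hxz : x ≠ z := fun h => hnaz (h ▸ hax)
    exact lemQA ht hframe hp3 (p := p) (m := i) hij ha hx hz hb hax hnaz
      (hBcl p hx hz hxz) hnab
  · have hyb : y ≠ b := fun h => hnab (h ▸ hay)
    exact lemQA ht hframe hp3 (p := q) (m := j) hij.symm ha hy hb hz hay hnab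
      (hBcl q hy hb hyb) hnaz
  · have hyz : y ≠ z := fun h => hnaz (h ▸ hay)
    exact lemQA ht hframe hp3 (p := q) (m := i) hij ha hy hz hb hay hnaz
      (hBcl q hy hz hyz) hnab

/-- At `t = 3`, all of `A` is complete to all `B j`, `j ≠ i₀`, where `i₀` is the class
of a missed vertex. -/
lemma lemCompB {t : ℕ} (ht : 3 ≤ t) (ht3 : t = 3) [Fintype W] {Q : SimpleGraph W} {A : Set W}
    {B C : Fin t → Set W} (hframe : IsFramePartition Q A B C)
    (hp3 : IndFree Q twoP3) (hc6 : IndFree Q (cycleG 6)) (hc7 : IndFree Q (cycleG 7))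
    (hBcl : ∀ i, Q.IsClique (B i)) {i0 : Fin t} {a0 b0 : W}
    (ha0 : a0 ∈ A) (hb0 : b0 ∈ B i0) (hn0 : ¬ Q.Adj a0 b0) :
    ∀ a ∈ A, ∀ (j : Fin t), j ≠ i0 → ∀ z ∈ B j, Q.Adj a z := by
  have hMiss := lemMiss1 ht ht3 hframe hp3 hBcl
  obtain ⟨hdAB, hdAC, hdBB, hdCC, hdBC, hUn, hAne, hBne, hCne, hA2, hAC, hBB, hCC, hBCa, hBA, hBC, hCB⟩ := hframe
  intro a ha j hj z hz
  by_contra hnz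
  have ha0cB : ∀ l, l ≠ i0 → ∀ w ∈ B l, Q.Adj a0 w := by
    intro l hl w hw
    exact hMiss a0 ha0 i0 l (fun h => hl h.symm) b0 hb0 hn0 w hw
  have hacB : ∀ l, l ≠ j → ∀ w ∈ B l, Q.Adj a w := by
    intro l hl w hw
    exact hMiss a ha j l (fun h => hl h.symm) z hz hnz w hw
  rcases eq_or_ne a a0 with rfl | hnea
  · exact hnz (hMiss a ha i0 j (fun h => hj h.symm) b0 hb0 hn0 z hz)
  obtain ⟨c1, hc1, hb0c1⟩ := hBC i0 b0 hb0
  obtain ⟨c2, hc2, hzc2⟩ := hBC j z hz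
  by_cases hva : Q.Adj a0 a
  · exact noC6 hc6 (w0 := a) (w1 := a0) (w2 := z) (w3 := c2) (w4 := c1) (w5 := b0)
      (h01 := hva.symm) (h12 := ha0cB j hj z hz) (h23 := hzc2)
      (h34 := hCC j i0 hj c2 hc2 c1 hc1) (h45 := hb0c1.symm)
      (h05 := hacB i0 (fun h => hj h.symm) b0 hb0)
      (n02 := hnz) (d02 := djne (hdAB j) ha hz)
      (n03 := hAC j a ha c2 hc2) (d03 := djne (hdAC j) ha hc2)
      (n04 := hAC i0 a ha c1 hc1) (d04 := djne (hdAC i0) ha hc1)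
      (n13 := hAC j a0 ha0 c2 hc2) (d13 := djne (hdAC j) ha0 hc2)
      (n14 := hAC i0 a0 ha0 c1 hc1) (d14 := djne (hdAC i0) ha0 hc1)
      (n15 := hn0) (d15 := djne (hdAB i0) ha0 hb0)
      (n24 := hBCa j i0 hj z hz c1 hc1) (d24 := djne (hdBC j i0) hz hc1)
      (n25 := hBB j i0 hj z hz b0 hb0) (d25 := djne (hdBB j i0 hj) hz hb0)
      (n35 := fun h => hBCa i0 j (fun h' => hj h'.symm) b0 hb0 c2 hc2 h.symm)
      (d35 := (djne (hdBC i0 j) hb0 hc2).symm)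
  · obtain ⟨k, hk1, hk2⟩ := exists_third ht i0 j
    obtain ⟨yk, hyk⟩ := hBne k
    exact noC7 hc7 (w0 := a0) (w1 := yk) (w2 := a) (w3 := b0) (w4 := c1) (w5 := c2) (w6 := z)
      (h01 := ha0cB k hk1 yk hyk) (h12 := (hacB k hk2 yk hyk).symm)
      (h23 := hacB i0 (fun h => hj h.symm) b0 hb0) (h34 := hb0c1)
      (h45 := hCC i0 j (fun h => hj h.symm) c1 hc1 c2 hc2) (h56 := hzc2.symm)
      (h06 := ha0cB j hj z hz)
      (n02 := hva) (d02 := hnea.symm)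
      (n03 := hn0) (d03 := djne (hdAB i0) ha0 hb0)
      (n04 := hAC i0 a0 ha0 c1 hc1) (d04 := djne (hdAC i0) ha0 hc1)
      (n05 := hAC j a0 ha0 c2 hc2) (d05 := djne (hdAC j) ha0 hc2)
      (n13 := hBB k i0 hk1 yk hyk b0 hb0) (d13 := djne (hdBB k i0 hk1) hyk hb0)
      (n14 := hBCa k i0 hk1 yk hyk c1 hc1) (d14 := djne (hdBC k i0) hyk hc1)
      (n15 := hBCa k j hk2 yk hyk c2 hc2) (d15 := djne (hdBC k j) hyk hc2)
      (n16 := hBB k j hk2 yk hyk z hz) (d16 := djne (hdBB k j hk2) hyk hz)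
      (n24 := hAC i0 a ha c1 hc1) (d24 := djne (hdAC i0) ha hc1)
      (n25 := hAC j a ha c2 hc2) (d25 := djne (hdAC j) ha hc2)
      (n26 := hnz) (d26 := djne (hdAB j) ha hz)
      (n35 := hBCa i0 j (fun h => hj h.symm) b0 hb0 c2 hc2) (d35 := djne (hdBC i0 j) hb0 hc2)
      (n36 := hBB i0 j (fun h => hj h.symm) b0 hb0 z hz) (d36 := djne (hdBB i0 j (fun h => hj h.symm)) hb0 hz)
      (n46 := fun h => hBCa j i0 hj z hz c1 hc1 h.symm) (d46 := (djne (hdBC j i0) hz hc1).symm)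

lemma lemACl3 {t : ℕ} (ht : 3 ≤ t) (ht3 : t = 3) [Fintype W] {Q : SimpleGraph W} {A : Set W}
    {B C : Fin t → Set W} (hframe : IsFramePartition Q A B C)
    (hp3 : IndFree Q twoP3) (hc4 : IndFree Q (cycleG 4)) (hc6 : IndFree Q (cycleG 6))
    (hc7 : IndFree Q (cycleG 7)) (hBcl : ∀ i, Q.IsClique (B i)) {i0 : Fin t} {a0 b0 : W}
    (ha0 : a0 ∈ A) (hb0 : b0 ∈ B i0) (hn0 : ¬ Q.Adj a0 b0) : Q.IsClique A := by
  have hC := lemCompB ht ht3 hframe hp3 hc6 hc7 hBcl ha0 hb0 hn0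
  obtain ⟨hdAB, hdAC, hdBB, hdCC, hdBC, hUn, hAne, hBne, hCne, hA2, hAC, hBB, hCC, hBCa, hBA, hBC, hCB⟩ := hframe
  intro u hu v hv hne
  by_contra hnuv
  obtain ⟨j, hj1, -⟩ := exists_third ht i0 i0
  obtain ⟨k, hk1, hk2⟩ := exists_third ht i0 j
  obtain ⟨bj, hbj⟩ := hBne j
  obtain ⟨bk, hbk⟩ := hBne k
  exact noC4 hc4 (w0 := u) (w1 := bj) (w2 := v) (w3 := bk)
    (h01 := hC u hu j hj1 bj hbj) (h12 := (hC v hv j hj1 bj hbj).symm)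
    (h23 := hC v hv k hk1 bk hbk) (h30 := (hC u hu k hk1 bk hbk).symm)
    (n02 := hnuv) (n13 := hBB j k (fun h => hk2 h.symm) bj hbj bk hbk)
    (d02 := hne) (d13 := djne (hdBB j k (fun h => hk2 h.symm)) hbj hbk)

lemma lemBCcomp {t : ℕ} (ht : 3 ≤ t) (ht3 : t = 3) [Fintype W] {Q : SimpleGraph W} {A : Set W}
    {B C : Fin t → Set W} (hframe : IsFramePartition Q A B C)
    (hp3 : IndFree Q twoP3) (hc4 : IndFree Q (cycleG 4)) (hc6 : IndFree Q (cycleG 6))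
    (hc7 : IndFree Q (cycleG 7)) (ht0 : IndFree Q T0)
    (hBcl : ∀ i, Q.IsClique (B i)) {i0 : Fin t} {a0 b0 : W}
    (ha0 : a0 ∈ A) (hb0 : b0 ∈ B i0) (hn0 : ¬ Q.Adj a0 b0) :
    ∀ i, CompleteTo Q (B i) (C i) := by
  have hMiss := lemMiss1 ht ht3 hframe hp3 hBcl
  have hCcl := lemCclique ht hframe hp3 hc4 hc6 hc7 ht0
  have hframe' := hframe
  obtain ⟨hdAB, hdAC, hdBB, hdCC, hdBC, hUn, hAne, hBne, hCne, hA2, hAC, hBB, hCC, hBCa, hBA, hBC, hCB⟩ := hframe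
  obtain ⟨j, hj1, -⟩ := exists_third ht i0 i0
  obtain ⟨k, hk1, hk2⟩ := exists_third ht i0 j
  have hR1 : ∀ b ∈ B i0, (∃ a ∈ A, ¬ Q.Adj a b) → ∀ c' ∈ C i0, Q.Adj b c' := by
    intro b hb ⟨a, ha, hnab⟩ c' hc'
    by_contra hnbc'
    obtain ⟨x, hx⟩ := hBne j
    obtain ⟨y, hy⟩ := hBne k
    have hax : Q.Adj a x := hMiss a ha i0 j (fun h => hj1 h.symm) b hb hnab x hx
    have hay : Q.Adj a y := hMiss a ha i0 k (fun h => hk1 h.symm) b hb hnab y hy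
    obtain ⟨c, hc, hbc⟩ := hBC i0 b hb
    have hccne : c ≠ c' := fun h => hnbc' (h ▸ hbc)
    exact no2P3 hp3 (w0 := x) (w1 := a) (w2 := y) (w3 := b) (w4 := c) (w5 := c')
      (h01 := hax.symm) (h12 := hay) (h34 := hbc) (h45 := hCcl i0 hc hc' hccne)
      (n02 := hBB j k (fun h => hk2 h.symm) x hx y hy) (d02 := djne (hdBB j k (fun h => hk2 h.symm)) hx hy)
      (n03 := hBB j i0 hj1 x hx b hb) (d03 := djne (hdBB j i0 hj1) hx hb)
      (n04 := hBCa j i0 hj1 x hx c hc) (d04 := djne (hdBC j i0) hx hc)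
      (n05 := hBCa j i0 hj1 x hx c' hc') (d05 := djne (hdBC j i0) hx hc')
      (n13 := hnab) (d13 := djne (hdAB i0) ha hb)
      (n14 := hAC i0 a ha c hc) (d14 := djne (hdAC i0) ha hc)
      (n15 := hAC i0 a ha c' hc') (d15 := djne (hdAC i0) ha hc')
      (n23 := hBB k i0 hk1 y hy b hb) (d23 := djne (hdBB k i0 hk1) hy hb)
      (n24 := hBCa k i0 hk1 y hy c hc) (d24 := djne (hdBC k i0) hy hc)
      (n25 := hBCa k i0 hk1 y hy c' hc') (d25 := djne (hdBC k i0) hy hc')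
      (n35 := hnbc') (d35 := djne (hdBC i0 i0) hb hc')
  intro i b hb c hc
  rcases eq_or_ne i i0 with rfl | hne
  · by_cases hex : ∃ a ∈ A, ¬ Q.Adj a b
    · exact hR1 b hb hex c hc
    · push_neg at hex
      have hb0compl : ∀ c' ∈ C i, Q.Adj b0 c' := hR1 b0 hb0 ⟨a0, ha0, hn0⟩
      rcases eq_or_ne b b0 with rfl | hne'
      · exact hb0compl c hc
      have hbb0 : Q.Adj b b0 := hBcl i hb hb0 hne'
      by_contra hnbc
      obtain ⟨y, hy⟩ := hBne j
      have ha0y : Q.Adj a0 y := hMiss a0 ha0 i j (fun h => hj1 h.symm) b0 hb0 hn0 y hy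
      obtain ⟨cy, hcy, hycy⟩ := hBC j y hy
      exact noC6 hc6 (w0 := a0) (w1 := b) (w2 := b0) (w3 := c) (w4 := cy) (w5 := y)
        (h01 := hex a0 ha0) (h12 := hbb0) (h23 := hb0compl c hc)
        (h34 := hCC i j (fun h => hj1 h.symm) c hc cy hcy) (h45 := hycy.symm) (h05 := ha0y)
        (n02 := hn0) (d02 := djne (hdAB i) ha0 hb0)
        (n03 := hAC i a0 ha0 c hc) (d03 := djne (hdAC i) ha0 hc)
        (n04 := hAC j a0 ha0 cy hcy) (d04 := djne (hdAC j) ha0 hcy)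
        (n13 := hnbc) (d13 := djne (hdBC i i) hb hc)
        (n14 := hBCa i j (fun h => hj1 h.symm) b hb cy hcy) (d14 := djne (hdBC i j) hb hcy)
        (n15 := hBB i j (fun h => hj1 h.symm) b hb y hy) (d15 := djne (hdBB i j (fun h => hj1 h.symm)) hb hy)
        (n24 := hBCa i j (fun h => hj1 h.symm) b0 hb0 cy hcy) (d24 := djne (hdBC i j) hb0 hcy)
        (n25 := hBB i j (fun h => hj1 h.symm) b0 hb0 y hy) (d25 := djne (hdBB i j (fun h => hj1 h.symm)) hb0 hy)
        (n35 := fun h => hBCa j i hj1 y hy c hc h.symm) (d35 := (djne (hdBC j i) hy hc).symm)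
  · by_contra hnbc
    have hab : Q.Adj a0 b :=
      lemCompB ht ht3 hframe' hp3 hc6 hc7 hBcl ha0 hb0 hn0 a0 ha0 i hne b hb
    have := lemL2 ht hframe' hp3 hb hc hnbc ha0 hab i0 (fun h => hne h.symm) b0 hb0
    exact hn0 this

theorem statement_6 {W : Type} [Fintype W] (t : ℕ) (ht : 3 ≤ t) (Q : SimpleGraph W)
    (A : Set W) (B C : Fin t → Set W) (hframe : IsFramePartition Q A B C)
    (hfree : IndFree Q twoP3 ∧ IndFree Q (cycleG 4) ∧ IndFree Q (cycleG 6) ∧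
      IndFree Q (cycleG 7) ∧ IndFree Q T0 ∧ IndFree Q (pentagon (t + 1))) :
    (Q.IsClique A ∧ (∀ i, Q.IsClique (B i)) ∧ (∀ i, Q.IsClique (C i))) ∧
    (CompleteTo Q A (⋃ i, B i) → IsVillaPartition Q A B C) ∧
    (¬ CompleteTo Q A (⋃ i, B i) →
      ∃ ht3 : t = 3,
        (∀ i, CompleteTo Q (B i) (C i)) ∧
        IsFiveBasketPartition Q A (fun i => B (Fin.cast ht3.symm i))
          (fun i => C (Fin.cast ht3.symm i)) ∅) := by
  obtain ⟨hp3, hc4, hc6, hc7, ht0, hpent⟩ := hfree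
  have hBcl := lemBclique ht hframe hp3 hc4 hc6 hc7 ht0 hpent
  have hCcl := lemCclique ht hframe hp3 hc4 hc6 hc7 ht0
  by_cases hAB : CompleteTo Q A (⋃ i, B i)
  · have hvilla := lemVilla ht hframe hp3 hc4 hc6 hc7 ht0 hpent hAB
    exact ⟨⟨hvilla.1.2.2.2.2.2.1, hBcl, hCcl⟩, fun _ => hvilla, fun hn => absurd hAB hn⟩
  · have ht3 := lemT3 ht hframe hp3 hAB
    subst ht3
    have hnAB := hAB
    simp only [CompleteTo, Set.mem_iUnion, not_forall] at hnAB
    obtain ⟨a0, ha0, bx, ⟨i0, hbx⟩, hn0⟩ := hnAB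
    have hframe' := hframe
    have hACl := lemACl3 ht rfl hframe' hp3 hc4 hc6 hc7 hBcl ha0 hbx hn0
    have hBCc := lemBCcomp ht rfl hframe' hp3 hc4 hc6 hc7 ht0 hBcl ha0 hbx hn0
    have hCompB := lemCompB ht rfl hframe' hp3 hc6 hc7 hBcl ha0 hbx hn0
    obtain ⟨hdAB, hdAC, hdBB, hdCC, hdBC, hUn, hAne, hBne, hCne, hA2, hAC, hBB, hCC, hBCa, hBA, hBC, hCB⟩ := hframe
    have hNest : ∀ a ∈ A, ∀ a' ∈ A,
        Q.neighborSet a ∩ B i0 ⊆ Q.neighborSet a' ∩ B i0 ∨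
        Q.neighborSet a' ∩ B i0 ⊆ Q.neighborSet a ∩ B i0 := by
      intro a ha a' ha'
      by_contra hcon
      push_neg at hcon
      obtain ⟨h1, h2⟩ := hcon
      obtain ⟨u, humem, hunot⟩ := Set.not_subset.mp h1
      obtain ⟨u', hu'mem, hu'not⟩ := Set.not_subset.mp h2
      have hau : Q.Adj a u := humem.1
      have huB : u ∈ B i0 := humem.2
      have ha'u' : Q.Adj a' u' := hu'mem.1
      have hu'B : u' ∈ B i0 := hu'mem.2
      have hnau' : ¬ Q.Adj a u' := fun h => hu'not ⟨h, hu'B⟩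
      have hna'u : ¬ Q.Adj a' u := fun h => hunot ⟨h, huB⟩
      have huu'ne : u ≠ u' := fun h => hnau' (h ▸ hau)
      have haa'ne : a ≠ a' := fun h => hna'u (h ▸ hau)
      exact noC4 hc4 (w0 := a) (w1 := u) (w2 := u') (w3 := a')
        (h01 := hau) (h12 := hBcl i0 huB hu'B huu'ne) (h23 := ha'u'.symm)
        (h30 := hACl ha' ha haa'ne.symm)
        (n02 := hnau') (n13 := fun h => hna'u h.symm)
        (d02 := djne (hdAB i0) ha hu'B) (d13 := (djne (hdAB i0) ha' huB).symm)
    have hTop : ∃ a ∈ A, B i0 ⊆ Q.neighborSet a := by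
      obtain ⟨a, haA, hmax⟩ := chain_top hAne (fun a => Q.neighborSet a ∩ B i0)
        (fun a ha a' ha' => hNest a ha a' ha')
      refine ⟨a, haA, fun b hb => ?_⟩
      obtain ⟨ab, hab, hbab⟩ := hBA i0 b hb
      exact (hmax ab hab ⟨hbab.symm, hb⟩).1
    refine ⟨⟨hACl, hBcl, hCcl⟩, fun h => absurd h hAB, fun _ => ⟨rfl, hBCc, ?_⟩⟩
    refine ⟨fun i => hdAB _, fun i => hdAC _, by simp, fun i j hij => hdBB _ _ hij,
      fun i j hij => hdCC _ _ hij, fun i j => hdBC _ _, fun i => by simp, fun i => by simp,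
      ?_, hACl, fun i => hBcl _, fun i => hCcl _, by simp,
      hAne, fun i => hBne _, fun i => hCne _,
      fun i j hij => hBB _ _ hij, fun i j hij => hCC _ _ hij, fun i => hAC _,
      fun i => hBCc _, fun i j hij => hBCa _ _ hij,
      ⟨i0, fun i hi => (fun a ha b hb => hCompB a ha _ hi b hb), hNest, hTop⟩,
      ⟨0, fun x hx => absurd hx (Set.notMem_empty x),
        fun x hx => absurd hx (Set.notMem_empty x)⟩⟩
    rw [Set.union_empty]
    exact hUn

end Paper
end

section
/- Every 5-basket is (2P_3, C_4, C_6, C_7, T_0)-free and contains an induced 3-pentagon. Moreover, every 5-basket is anticonnected and contains no simplicial and no universal vertices. -/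
namespace Paper

open SimpleGraph

variable {V : Type} {W : Type}

lemma cycleG_adj {n : ℕ} (x y : ZMod n) :
    (cycleG n).Adj x y ↔ x ≠ y ∧ (y = x + 1 ∨ x = y + 1) :=
  SimpleGraph.fromRel_adj _ x y

instance {n : ℕ} : DecidableRel (cycleG n).Adj :=
  fun x y => decidable_of_iff' _ (cycleG_adj x y)

lemma cycleG_shift {n : ℕ} (k x y : ZMod n) :
    (cycleG n).Adj (x + k) (y + k) ↔ (cycleG n).Adj x y := by
  simp only [cycleG_adj]
  constructor
  · rintro ⟨h1, h2⟩
    refine ⟨fun e => h1 (by rw [e]), ?_⟩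
    rcases h2 with h | h
    · exact Or.inl (by linear_combination h)
    · exact Or.inr (by linear_combination h)
  · rintro ⟨h1, h2⟩
    refine ⟨fun e => h1 (by linear_combination e), ?_⟩
    rcases h2 with h | h
    · exact Or.inl (by linear_combination h)
    · exact Or.inr (by linear_combination h)

lemma cycleG_neg {n : ℕ} (x y : ZMod n) :
    (cycleG n).Adj (-x) (-y) ↔ (cycleG n).Adj x y := by
  simp only [cycleG_adj, ne_eq, neg_inj]
  constructor
  · rintro ⟨h1, h2⟩
    refine ⟨h1, ?_⟩
    rcases h2 with h | h
    · exact Or.inr (by linear_combination h)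
    · exact Or.inl (by linear_combination h)
  · rintro ⟨h1, h2⟩
    refine ⟨h1, ?_⟩
    rcases h2 with h | h
    · exact Or.inr (by linear_combination h)
    · exact Or.inl (by linear_combination h)


structure Cyc (Q : SimpleGraph W) (n : ℕ) where
  u : ZMod n → W
  inj : Function.Injective u
  adj : ∀ x y, Q.Adj (u x) (u y) ↔ (cycleG n).Adj x y

namespace Cyc
variable {Q : SimpleGraph W} {n : ℕ}

def rot (c : Cyc Q n) (k : ZMod n) : Cyc Q n :=
  ⟨fun x => c.u (x + k), c.inj.comp (add_left_injective k),
   fun x y => (c.adj _ _).trans (cycleG_shift k x y)⟩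

def mir (c : Cyc Q n) : Cyc Q n :=
  ⟨fun x => c.u (-x), c.inj.comp neg_injective,
   fun x y => (c.adj _ _).trans (cycleG_neg x y)⟩

lemma ne (c : Cyc Q n) {x y : ZMod n} (h : x ≠ y) : c.u x ≠ c.u y :=
  fun e => h (c.inj e)

lemma A (c : Cyc Q n) {x y : ZMod n} (h : (cycleG n).Adj x y) : Q.Adj (c.u x) (c.u y) :=
  (c.adj x y).2 h

lemma N (c : Cyc Q n) {x y : ZMod n} (h : ¬(cycleG n).Adj x y) :
    ¬Q.Adj (c.u x) (c.u y) := fun e => h ((c.adj x y).1 e)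

lemma rot_u (c : Cyc Q n) (k x : ZMod n) : (c.rot k).u x = c.u (x + k) := rfl
lemma mir_u (c : Cyc Q n) (x : ZMod n) : c.mir.u x = c.u (-x) := rfl

end Cyc
structure Bk (Q : SimpleGraph W) where
  A : Set W
  B : Fin 3 → Set W
  C : Fin 3 → Set W
  F : Set W
  istar : Fin 3
  jstar : Fin 3
  cover : ∀ v, v ∈ A ∨ (∃ i, v ∈ B i) ∨ (∃ i, v ∈ C i) ∨ v ∈ F
  dAC : ∀ i, Disjoint A (C i)
  dBB : ∀ i j, i ≠ j → Disjoint (B i) (B j)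
  dBC : ∀ i j, Disjoint (B i) (C j)
  dBF : ∀ i, Disjoint (B i) F
  dCF : ∀ i, Disjoint (C i) F
  clA : Q.IsClique A
  clB : ∀ i, Q.IsClique (B i)
  clC : ∀ i, Q.IsClique (C i)
  clF : Q.IsClique F
  neA : A.Nonempty
  neB : ∀ i, (B i).Nonempty
  neC : ∀ i, (C i).Nonempty
  aBB : ∀ i j, i ≠ j → ∀ b ∈ B i, ∀ b' ∈ B j, ¬Q.Adj b b'
  cCC : ∀ i j, i ≠ j → ∀ c ∈ C i, ∀ c' ∈ C j, Q.Adj c c'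
  aAC : ∀ i, ∀ a ∈ A, ∀ c ∈ C i, ¬Q.Adj a c
  cBC : ∀ i, ∀ b ∈ B i, ∀ c ∈ C i, Q.Adj b c
  aBC : ∀ i j, i ≠ j → ∀ b ∈ B i, ∀ c ∈ C j, ¬Q.Adj b c
  cAB : ∀ i, i ≠ istar → ∀ a ∈ A, ∀ b ∈ B i, Q.Adj a b
  nest : ∀ a ∈ A, ∀ a' ∈ A,
      (∀ b ∈ B istar, Q.Adj a b → Q.Adj a' b) ∨ (∀ b ∈ B istar, Q.Adj a' b → Q.Adj a b)
  topA : ∃ a ∈ A, ∀ b ∈ B istar, Q.Adj a b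
  cFA : ∀ f ∈ F, ∀ a ∈ A, Q.Adj f a
  cFB : ∀ i, i ≠ jstar → ∀ f ∈ F, ∀ b ∈ B i, Q.Adj f b
  cFC : ∀ i, i ≠ jstar → ∀ f ∈ F, ∀ c ∈ C i, Q.Adj f c
  aFB : ∀ f ∈ F, ∀ b ∈ B jstar, ¬Q.Adj f b
  aFC : ∀ f ∈ F, ∀ c ∈ C jstar, ¬Q.Adj f c

namespace Bk
variable {Q : SimpleGraph W}

/-- two vertices of A ∪ F are adjacent -/
theorem adjK (K : Bk Q) {x y : W} (hx : x ∈ K.A ∨ x ∈ K.F) (hy : y ∈ K.A ∨ y ∈ K.F)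
    (hne : x ≠ y) : Q.Adj x y := by
  rcases hx with hx | hx <;> rcases hy with hy | hy
  · exact K.clA hx hy hne
  · exact (K.cFA y hy x hx).symm
  · exact K.cFA x hx y hy
  · exact K.clF hx hy hne

theorem adjC (K : Bk Q) {m m' : Fin 3} {x y : W} (hx : x ∈ K.C m) (hy : y ∈ K.C m')
    (hne : x ≠ y) : Q.Adj x y := by
  rcases eq_or_ne m m' with rfl | h
  · exact K.clC m hx hy hne
  · exact K.cCC m m' h x hx y hy

/-- X : two B-vertices of a stable 4-set force contradiction -/
theorem X (K : Bk Q) {i j : Fin 3} {b b' v v' : W} (hb : b ∈ K.B i) (hb' : b' ∈ K.B j)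
    (d1 : b ≠ b') (d2 : b ≠ v) (d3 : b ≠ v') (d4 : b' ≠ v) (d5 : b' ≠ v') (d6 : v ≠ v')
    (n1 : ¬Q.Adj b b') (n2 : ¬Q.Adj b v) (n3 : ¬Q.Adj b v')
    (n4 : ¬Q.Adj b' v) (n5 : ¬Q.Adj b' v') (n6 : ¬Q.Adj v v') : False := by
  have hij : i ≠ j := by rintro rfl; exact n1 (K.clB i hb hb' d1)
  have key : ∀ u : W, u ≠ b → u ≠ b' → ¬Q.Adj b u → ¬Q.Adj b' u →
      ∃ m, m ≠ i ∧ m ≠ j ∧ (u ∈ K.B m ∨ u ∈ K.C m) := by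
    intro u ub ub' nb nb'
    rcases K.cover u with h | ⟨m, h⟩ | ⟨m, h⟩ | h
    · rcases eq_or_ne i K.istar with rfl | hi
      · exact absurd (K.cAB j (fun e => hij e.symm) u h b' hb').symm nb'
      · exact absurd (K.cAB i hi u h b hb).symm nb
    · have hmi : m ≠ i := by rintro rfl; exact nb (K.clB m hb h ub.symm)
      have hmj : m ≠ j := by rintro rfl; exact nb' (K.clB m hb' h ub'.symm)
      exact ⟨m, hmi, hmj, Or.inl h⟩
    · have hmi : m ≠ i := by rintro rfl; exact nb (K.cBC m b hb u h)
      have hmj : m ≠ j := by rintro rfl; exact nb' (K.cBC m b' hb' u h)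
      exact ⟨m, hmi, hmj, Or.inr h⟩
    · rcases eq_or_ne i K.jstar with rfl | hi
      · exact absurd (K.cFB j (fun e => hij e.symm) u h b' hb').symm nb'
      · exact absurd (K.cFB i hi u h b hb).symm nb
  obtain ⟨m, hmi, hmj, hv⟩ := key v d2.symm d4.symm n2 n4
  obtain ⟨m', hmi', hmj', hv'⟩ := key v' d3.symm d5.symm n3 n5
  have third : ∀ i j m m' : Fin 3, i ≠ j → m ≠ i → m ≠ j → m' ≠ i → m' ≠ j → m = m' := by
    decide
  have hmm : m = m' := third i j m m' hij hmi hmj hmi' hmj'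
  subst hmm
  rcases hv with hv | hv <;> rcases hv' with hv' | hv'
  · exact n6 (K.clB m hv hv' d6)
  · exact n6 (K.cBC m v hv v' hv')
  · exact n6 (K.cBC m v' hv' v hv).symm
  · exact n6 (K.clC m hv hv' d6)

theorem stable4 (K : Bk Q) {v1 v2 v3 v4 : W}
    (d12 : v1 ≠ v2) (d13 : v1 ≠ v3) (d14 : v1 ≠ v4)
    (d23 : v2 ≠ v3) (d24 : v2 ≠ v4) (d34 : v3 ≠ v4)
    (n12 : ¬Q.Adj v1 v2) (n13 : ¬Q.Adj v1 v3) (n14 : ¬Q.Adj v1 v4)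
    (n23 : ¬Q.Adj v2 v3) (n24 : ¬Q.Adj v2 v4) (n34 : ¬Q.Adj v3 v4) : False := by
  have d21 := d12.symm; have d31 := d13.symm; have d41 := d14.symm
  have d32 := d23.symm; have d42 := d24.symm; have d43 := d34.symm
  have n21 : ¬Q.Adj v2 v1 := fun h => n12 h.symm
  have n31 : ¬Q.Adj v3 v1 := fun h => n13 h.symm
  have n41 : ¬Q.Adj v4 v1 := fun h => n14 h.symm
  have n32 : ¬Q.Adj v3 v2 := fun h => n23 h.symm
  have n42 : ¬Q.Adj v4 v2 := fun h => n24 h.symm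
  have n43 : ¬Q.Adj v4 v3 := fun h => n34 h.symm
  rcases K.cover v1 with h1 | ⟨i1, h1⟩ | ⟨i1, h1⟩ | h1 <;>
  rcases K.cover v2 with h2 | ⟨i2, h2⟩ | ⟨i2, h2⟩ | h2 <;>
  rcases K.cover v3 with h3 | ⟨i3, h3⟩ | ⟨i3, h3⟩ | h3 <;>
  rcases K.cover v4 with h4 | ⟨i4, h4⟩ | ⟨i4, h4⟩ | h4 <;>
  first
  | exact n12 (K.adjK (Or.inl h1) (Or.inl h2) d12)
  | exact n12 (K.adjK (Or.inl h1) (Or.inr h2) d12)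
  | exact n12 (K.adjK (Or.inr h1) (Or.inl h2) d12)
  | exact n12 (K.adjK (Or.inr h1) (Or.inr h2) d12)
  | exact n13 (K.adjK (Or.inl h1) (Or.inl h3) d13)
  | exact n13 (K.adjK (Or.inl h1) (Or.inr h3) d13)
  | exact n13 (K.adjK (Or.inr h1) (Or.inl h3) d13)
  | exact n13 (K.adjK (Or.inr h1) (Or.inr h3) d13)
  | exact n14 (K.adjK (Or.inl h1) (Or.inl h4) d14)
  | exact n14 (K.adjK (Or.inl h1) (Or.inr h4) d14)
  | exact n14 (K.adjK (Or.inr h1) (Or.inl h4) d14)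
  | exact n14 (K.adjK (Or.inr h1) (Or.inr h4) d14)
  | exact n23 (K.adjK (Or.inl h2) (Or.inl h3) d23)
  | exact n23 (K.adjK (Or.inl h2) (Or.inr h3) d23)
  | exact n23 (K.adjK (Or.inr h2) (Or.inl h3) d23)
  | exact n23 (K.adjK (Or.inr h2) (Or.inr h3) d23)
  | exact n24 (K.adjK (Or.inl h2) (Or.inl h4) d24)
  | exact n24 (K.adjK (Or.inl h2) (Or.inr h4) d24)
  | exact n24 (K.adjK (Or.inr h2) (Or.inl h4) d24)
  | exact n24 (K.adjK (Or.inr h2) (Or.inr h4) d24)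
  | exact n34 (K.adjK (Or.inl h3) (Or.inl h4) d34)
  | exact n34 (K.adjK (Or.inl h3) (Or.inr h4) d34)
  | exact n34 (K.adjK (Or.inr h3) (Or.inl h4) d34)
  | exact n34 (K.adjK (Or.inr h3) (Or.inr h4) d34)
  | exact n12 (K.adjC h1 h2 d12)
  | exact n13 (K.adjC h1 h3 d13)
  | exact n14 (K.adjC h1 h4 d14)
  | exact n23 (K.adjC h2 h3 d23)
  | exact n24 (K.adjC h2 h4 d24)
  | exact n34 (K.adjC h3 h4 d34)
  | exact K.X h1 h2 d12 d13 d14 d23 d24 d34 n12 n13 n14 n23 n24 n34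
  | exact K.X h1 h3 d13 d12 d14 d32 d34 d24 n13 n12 n14 n32 n34 n24
  | exact K.X h1 h4 d14 d12 d13 d42 d43 d23 n14 n12 n13 n42 n43 n23
  | exact K.X h2 h3 d23 d21 d24 d31 d34 d14 n23 n21 n24 n31 n34 n14
  | exact K.X h2 h4 d24 d21 d23 d41 d43 d13 n24 n21 n23 n41 n43 n13
  | exact K.X h3 h4 d34 d31 d32 d41 d42 d12 n34 n31 n32 n41 n42 n12

end Bk
namespace Bk
variable {Q : SimpleGraph W}

theorem c4CC (K : Bk Q) (c : Cyc Q 4) {p q : Fin 3}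
    (h0 : c.u 0 ∈ K.C p) (h1 : c.u 1 ∈ K.C q) : False := by
  have a12 : Q.Adj (c.u 1) (c.u 2) := c.A (by decide)
  have a23 : Q.Adj (c.u 2) (c.u 3) := c.A (by decide)
  have a30 : Q.Adj (c.u 3) (c.u 0) := c.A (by decide)
  have n02 : ¬Q.Adj (c.u 0) (c.u 2) := c.N (by decide)
  have n13 : ¬Q.Adj (c.u 1) (c.u 3) := c.N (by decide)
  rcases K.cover (c.u 2) with h2 | ⟨m, h2⟩ | ⟨m, h2⟩ | h2
  · exact K.aAC q _ h2 _ h1 a12.symm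
  · -- u2 ∈ B m
    have hmq : m = q := by
      by_contra hm; exact K.aBC m q hm _ h2 _ h1 a12.symm
    subst hmq
    have hpq : p ≠ m := by
      rintro rfl; exact n02 (K.cBC p _ h2 _ h0).symm
    rcases K.cover (c.u 3) with h3 | ⟨m', h3⟩ | ⟨m', h3⟩ | h3
    · exact K.aAC p _ h3 _ h0 a30
    · have hm'p : m' = p := by
        by_contra hm; exact K.aBC m' p hm _ h3 _ h0 a30
      subst hm'p
      exact K.aBB m m' (fun e => hpq e.symm) _ h2 _ h3 a23
    · exact n13 (K.adjC h1 h3 (c.ne (by decide)))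
    · have hq : m = K.jstar := by
        by_contra hq; exact n13 (K.cFC m hq _ h3 _ h1).symm
      exact K.aFB _ h3 _ (hq ▸ h2) a23.symm
  · exact n02 (K.adjC h0 h2 (c.ne (by decide)))
  · -- u2 ∈ F
    have hp : p = K.jstar := by
      by_contra hp; exact n02 (K.cFC p hp _ h2 _ h0).symm
    rcases K.cover (c.u 3) with h3 | ⟨m', h3⟩ | ⟨m', h3⟩ | h3
    · exact K.aAC p _ h3 _ h0 a30
    · have hm'p : m' = p := by
        by_contra hm; exact K.aBC m' p hm _ h3 _ h0 a30
      exact K.aFB _ h2 _ (hp ▸ hm'p ▸ h3) a23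
    · exact n13 (K.adjC h1 h3 (c.ne (by decide)))
    · exact K.aFC _ h3 _ (hp ▸ h0) a30

theorem c4C (K : Bk Q) (c : Cyc Q 4) {p : Fin 3} (h0 : c.u 0 ∈ K.C p) : False := by
  have a01 : Q.Adj (c.u 0) (c.u 1) := c.A (by decide)
  have a30 : Q.Adj (c.u 3) (c.u 0) := c.A (by decide)
  have n13 : ¬Q.Adj (c.u 1) (c.u 3) := c.N (by decide)
  have hno1 : ∀ q, c.u 1 ∉ K.C q := fun q h => K.c4CC c h0 h
  have hno3 : ∀ q, c.u 3 ∉ K.C q := fun q h => K.c4CC (c.rot 3)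
    (by rw [Cyc.rot_u, (by decide : (0:ZMod 4) + 3 = 3)]; exact h)
    (by rw [Cyc.rot_u, (by decide : (1:ZMod 4) + 3 = 0)]; exact h0)
  have h1B : (c.u 1 ∈ K.B p ∨ (c.u 1 ∈ K.F ∧ p ≠ K.jstar)) := by
    rcases K.cover (c.u 1) with h1 | ⟨m, h1⟩ | ⟨m, h1⟩ | h1
    · exact absurd a01.symm (K.aAC p _ h1 _ h0)
    · have : m = p := by
        by_contra hm; exact K.aBC m p hm _ h1 _ h0 a01.symm
      exact Or.inl (this ▸ h1)
    · exact absurd h1 (hno1 m)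
    · refine Or.inr ⟨h1, fun e => ?_⟩
      exact K.aFC _ h1 _ (e ▸ h0) a01.symm
  have h3B : (c.u 3 ∈ K.B p ∨ (c.u 3 ∈ K.F ∧ p ≠ K.jstar)) := by
    rcases K.cover (c.u 3) with h3 | ⟨m, h3⟩ | ⟨m, h3⟩ | h3
    · exact absurd a30 (K.aAC p _ h3 _ h0)
    · have : m = p := by
        by_contra hm; exact K.aBC m p hm _ h3 _ h0 a30
      exact Or.inl (this ▸ h3)
    · exact absurd h3 (hno3 m)
    · refine Or.inr ⟨h3, fun e => ?_⟩
      exact K.aFC _ h3 _ (e ▸ h0) a30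
  rcases h1B with h1 | ⟨h1, hp⟩ <;> rcases h3B with h3 | ⟨h3, hp'⟩
  · exact n13 (K.clB p h1 h3 (c.ne (by decide)))
  · exact n13 (K.cFB p hp' _ h3 _ h1).symm
  · exact n13 (K.cFB p hp _ h1 _ h3)
  · exact n13 (K.clF h1 h3 (c.ne (by decide)))

theorem c4BB (K : Bk Q) (c : Cyc Q 4) (hnoC : ∀ k q, c.u k ∉ K.C q) {p q : Fin 3}
    (h0 : c.u 0 ∈ K.B p) (h1 : c.u 1 ∈ K.B q) : False := by
  have a01 : Q.Adj (c.u 0) (c.u 1) := c.A (by decide)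
  have a12 : Q.Adj (c.u 1) (c.u 2) := c.A (by decide)
  have a30 : Q.Adj (c.u 3) (c.u 0) := c.A (by decide)
  have n02 : ¬Q.Adj (c.u 0) (c.u 2) := c.N (by decide)
  have n13 : ¬Q.Adj (c.u 1) (c.u 3) := c.N (by decide)
  have hqp : q = p := by
    by_contra hq; exact K.aBB p q (fun e => hq e.symm) _ h0 _ h1 a01
  subst hqp
  have h2 : c.u 2 ∈ K.A := by
    rcases K.cover (c.u 2) with h2 | ⟨m, h2⟩ | ⟨m, h2⟩ | h2
    · exact h2
    · rcases eq_or_ne m q with rfl | hm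
      · exact absurd (K.clB m h0 h2 (c.ne (by decide))) n02
      · exact absurd a12.symm (K.aBB m q hm _ h2 _ h1)
    · exact absurd h2 (hnoC 2 m)
    · rcases eq_or_ne q K.jstar with rfl | hq
      · exact absurd a12.symm (K.aFB _ h2 _ h1)
      · exact absurd (K.cFB q hq _ h2 _ h0).symm n02
  have h3 : c.u 3 ∈ K.A := by
    rcases K.cover (c.u 3) with h3 | ⟨m, h3⟩ | ⟨m, h3⟩ | h3
    · exact h3
    · rcases eq_or_ne m q with rfl | hm
      · exact absurd (K.clB m h3 h1 (c.ne (by decide))).symm n13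
      · exact absurd a30 (K.aBB m q hm _ h3 _ h0)
    · exact absurd h3 (hnoC 3 m)
    · rcases eq_or_ne q K.jstar with rfl | hq
      · exact absurd a30 (K.aFB _ h3 _ h0)
      · exact absurd (K.cFB q hq _ h3 _ h1) (fun e => n13 e.symm)
  have hqi : q = K.istar := by
    by_contra hq; exact n02 (K.cAB q hq _ h2 _ h0).symm
  rcases K.nest _ h2 _ h3 with hn | hn
  · exact n13 (hn _ (hqi ▸ h1) a12.symm).symm
  · exact n02 (hn _ (hqi ▸ h0) a30).symm

theorem c4B (K : Bk Q) (c : Cyc Q 4) (hnoC : ∀ k q, c.u k ∉ K.C q) {p : Fin 3}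
    (h0 : c.u 0 ∈ K.B p) : False := by
  have n13 : ¬Q.Adj (c.u 1) (c.u 3) := c.N (by decide)
  have hK1 : (c.u 1 ∈ K.A ∨ c.u 1 ∈ K.F) → False := by
    intro h1
    rcases K.cover (c.u 3) with h3 | ⟨m', h3⟩ | ⟨m', h3⟩ | h3
    · exact n13 (K.adjK h1 (Or.inl h3) (c.ne (by decide)))
    · exact K.c4BB (c.rot 3) (fun k q => hnoC (k + 3) q)
        (by rw [Cyc.rot_u, (by decide : (0:ZMod 4) + 3 = 3)]; exact h3)
        (by rw [Cyc.rot_u, (by decide : (1:ZMod 4) + 3 = 0)]; exact h0)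
    · exact absurd h3 (hnoC 3 m')
    · exact n13 (K.adjK h1 (Or.inr h3) (c.ne (by decide)))
  rcases K.cover (c.u 1) with h1 | ⟨m, h1⟩ | ⟨m, h1⟩ | h1
  · exact hK1 (Or.inl h1)
  · exact K.c4BB c hnoC h0 h1
  · exact absurd h1 (hnoC 1 m)
  · exact hK1 (Or.inr h1)

theorem noC4 (K : Bk Q) (c : Cyc Q 4) : False := by
  have hnoC : ∀ k q, c.u k ∉ K.C q := by
    intro k q h
    exact K.c4C (c.rot k) (p := q) (by rw [Cyc.rot_u, zero_add]; exact h)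
  have n02 : ¬Q.Adj (c.u 0) (c.u 2) := c.N (by decide)
  have hK0 : (c.u 0 ∈ K.A ∨ c.u 0 ∈ K.F) → False := by
    intro h0
    rcases K.cover (c.u 2) with h2 | ⟨p, h2⟩ | ⟨p, h2⟩ | h2
    · exact n02 (K.adjK h0 (Or.inl h2) (c.ne (by decide)))
    · exact K.c4B (c.rot 2) (fun k q => hnoC (k + 2) q)
        (by rw [Cyc.rot_u, zero_add]; exact h2)
    · exact absurd h2 (hnoC 2 p)
    · exact n02 (K.adjK h0 (Or.inr h2) (c.ne (by decide)))
  rcases K.cover (c.u 0) with h0 | ⟨p, h0⟩ | ⟨p, h0⟩ | h0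
  · exact hK0 (Or.inl h0)
  · exact K.c4B c hnoC h0
  · exact absurd h0 (hnoC 0 p)
  · exact hK0 (Or.inr h0)

theorem shape2_6 (K : Bk Q) (c : Cyc Q 6) {i m : Fin 3}
    (h0 : c.u 0 ∈ K.C i) (h1 : c.u 1 ∈ K.F) (h5 : c.u 5 ∈ K.C m) : False := by
  have a01 : Q.Adj (c.u 0) (c.u 1) := c.A (by decide)
  have n15 : ¬Q.Adj (c.u 1) (c.u 5) := c.N (by decide)
  have n30 : ¬Q.Adj (c.u 3) (c.u 0) := c.N (by decide)
  have n13 : ¬Q.Adj (c.u 1) (c.u 3) := c.N (by decide)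
  have n35 : ¬Q.Adj (c.u 3) (c.u 5) := c.N (by decide)
  have hij : i ≠ K.jstar := by
    rintro rfl; exact K.aFC _ h1 _ h0 a01.symm
  have hmj : m = K.jstar := by
    by_contra hm; exact n15 (K.cFC m hm _ h1 _ h5)
  rcases K.cover (c.u 3) with h3 | ⟨k, h3⟩ | ⟨k, h3⟩ | h3
  · exact n13 (K.cFA _ h1 _ h3)
  · rcases eq_or_ne k K.jstar with hk | hk
    · exact n35 (K.cBC K.jstar _ (hk ▸ h3) _ (hmj ▸ h5))
    · exact n13 (K.cFB k hk _ h1 _ h3)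
  · exact n30 (K.adjC h3 h0 (c.ne (by decide)))
  · exact n13 (K.clF h1 h3 (c.ne (by decide)))

theorem shape1_6 (K : Bk Q) (c : Cyc Q 6) {i m : Fin 3}
    (h0 : c.u 0 ∈ K.C i) (h1 : c.u 1 ∈ K.B i) (h5 : c.u 5 ∈ K.C m) : False := by
  have a12 : Q.Adj (c.u 1) (c.u 2) := c.A (by decide)
  have a45 : Q.Adj (c.u 4) (c.u 5) := c.A (by decide)
  have a23 : Q.Adj (c.u 2) (c.u 3) := c.A (by decide)
  have n15 : ¬Q.Adj (c.u 1) (c.u 5) := c.N (by decide)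
  have n20 : ¬Q.Adj (c.u 2) (c.u 0) := c.N (by decide)
  have n40 : ¬Q.Adj (c.u 4) (c.u 0) := c.N (by decide)
  have n41 : ¬Q.Adj (c.u 4) (c.u 1) := c.N (by decide)
  have n42 : ¬Q.Adj (c.u 4) (c.u 2) := c.N (by decide)
  have n30 : ¬Q.Adj (c.u 3) (c.u 0) := c.N (by decide)
  have n31 : ¬Q.Adj (c.u 3) (c.u 1) := c.N (by decide)
  have n35 : ¬Q.Adj (c.u 3) (c.u 5) := c.N (by decide)
  have hmi : m ≠ i := by
    rintro rfl; exact n15 (K.cBC m _ h1 _ h5)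
  -- u2 ∈ A
  have h2 : c.u 2 ∈ K.A := by
    rcases K.cover (c.u 2) with h2 | ⟨k, h2⟩ | ⟨k, h2⟩ | h2
    · exact h2
    · have hk : k = i := by
        by_contra hk
        exact K.aBB k i hk _ h2 _ h1 a12.symm
      exact (n20 (K.cBC i _ (hk ▸ h2) _ h0)).elim
    · exact (n20 (K.adjC h2 h0 (c.ne (by decide)))).elim
    · rcases eq_or_ne i K.jstar with rfl | hi
      · exact (K.aFB _ h2 _ h1 a12.symm).elim
      · exact (n20 (K.cFC i hi _ h2 _ h0)).elim
  -- u_{n-2} ∈ B m with m = istar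
  have h4 : c.u 4 ∈ K.B m ∧ m = K.istar := by
    rcases K.cover (c.u 4) with h4 | ⟨k, h4⟩ | ⟨k, h4⟩ | h4
    · exact (n42 (K.clA h4 h2 (c.ne (by decide)))).elim
    · have hk : k = m := by
        by_contra hk; exact K.aBC k m hk _ h4 _ h5 a45
      subst hk
      refine ⟨h4, ?_⟩
      by_contra hm
      exact n42 ((K.cAB k hm _ h2 _ h4).symm)
    · exact (n40 (K.adjC h4 h0 (c.ne (by decide)))).elim
    · exact (n42 (K.cFA _ h4 _ h2)).elim
  obtain ⟨h4, hmistar⟩ := h4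
  have hii : i ≠ K.istar := fun e => hmi (hmistar.trans e.symm)
  -- u3
  rcases K.cover (c.u 3) with h3 | ⟨k, h3⟩ | ⟨k, h3⟩ | h3
  · exact n31 (K.cAB i hii _ h3 _ h1)
  · have hkm : k ≠ m := by
      rintro rfl; exact n35 (K.cBC k _ h3 _ h5)
    have a34 : Q.Adj (c.u 3) (c.u 4) := c.A (by decide)
    exact K.aBB k m hkm _ h3 _ h4 a34
  · exact absurd (K.adjC h3 h0 (c.ne (by decide))) n30
  · have hi : i = K.jstar := by
      by_contra hi; exact n30 (K.cFC i hi _ h3 _ h0)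
    have hm : m = K.jstar := by
      by_contra hm; exact n35 (K.cFC m hm _ h3 _ h5)
    exact hmi (hm.trans hi.symm)

theorem notC_6 (K : Bk Q) (c : Cyc Q 6) {i : Fin 3} (h0 : c.u 0 ∈ K.C i) : False := by
  have a01 : Q.Adj (c.u 0) (c.u 1) := c.A (by decide)
  have a50 : Q.Adj (c.u 5) (c.u 0) := c.A (by decide)
  have n15 : ¬Q.Adj (c.u 1) (c.u 5) := c.N (by decide)
  have cl1 : c.u 1 ∈ K.B i ∨ (∃ m, c.u 1 ∈ K.C m) ∨ c.u 1 ∈ K.F := by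
    rcases K.cover (c.u 1) with h | ⟨k, h⟩ | ⟨k, h⟩ | h
    · exact absurd a01.symm (K.aAC i _ h _ h0)
    · have hk : k = i := by
        by_contra hk; exact K.aBC k i hk _ h _ h0 a01.symm
      exact Or.inl (hk ▸ h)
    · exact Or.inr (Or.inl ⟨k, h⟩)
    · exact Or.inr (Or.inr h)
  have cl5 : c.u 5 ∈ K.B i ∨ (∃ m, c.u 5 ∈ K.C m) ∨ c.u 5 ∈ K.F := by
    rcases K.cover (c.u 5) with h | ⟨k, h⟩ | ⟨k, h⟩ | h
    · exact absurd a50 (K.aAC i _ h _ h0)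
    · have hk : k = i := by
        by_contra hk; exact K.aBC k i hk _ h _ h0 a50
      exact Or.inl (hk ▸ h)
    · exact Or.inr (Or.inl ⟨k, h⟩)
    · exact Or.inr (Or.inr h)
  rcases cl1 with h1 | ⟨m, h1⟩ | h1 <;> rcases cl5 with h5 | ⟨m', h5⟩ | h5
  · exact n15 (K.clB i h1 h5 (c.ne (by decide)))
  · exact K.shape1_6 c h0 h1 h5
  · have hi : i ≠ K.jstar := by
      rintro rfl; exact K.aFC _ h5 _ h0 a50
    exact n15 (K.cFB i hi _ h5 _ h1).symm
  · exact K.shape1_6 c.mir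
      (by rw [Cyc.mir_u, neg_zero]; exact h0)
      (by rw [Cyc.mir_u, (by decide : -(1 : ZMod 6) = 5)]; exact h5)
      (by rw [Cyc.mir_u, (by decide : -(5 : ZMod 6) = 1)]; exact h1)
  · exact n15 (K.adjC h1 h5 (c.ne (by decide)))
  · exact K.shape2_6 c.mir
      (by rw [Cyc.mir_u, neg_zero]; exact h0)
      (by rw [Cyc.mir_u, (by decide : -(1 : ZMod 6) = 5)]; exact h5)
      (by rw [Cyc.mir_u, (by decide : -(5 : ZMod 6) = 1)]; exact h1)
  · have hi : i ≠ K.jstar := by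
      rintro rfl; exact K.aFC _ h1 _ h0 a01.symm
    exact n15 (K.cFB i hi _ h1 _ h5)
  · exact K.shape2_6 c h0 h1 h5
  · exact n15 (K.clF h1 h5 (c.ne (by decide)))

theorem noK_6 (K : Bk Q) (c : Cyc Q 6) (hnoC : ∀ k q, c.u k ∉ K.C q)
    (h0 : c.u 0 ∈ K.A ∨ c.u 0 ∈ K.F) : False := by
  have a23 : Q.Adj (c.u 2) (c.u 3) := c.A (by decide)
  have a34 : Q.Adj (c.u 3) (c.u 4) := c.A (by decide)
  have n24 : ¬Q.Adj (c.u 2) (c.u 4) := c.N (by decide)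
  have hB : ∀ x : ZMod 6, ¬Q.Adj (c.u 0) (c.u x) → c.u 0 ≠ c.u x → ∃ p, c.u x ∈ K.B p := by
    intro x hn hne
    rcases K.cover (c.u x) with h | ⟨p, h⟩ | ⟨p, h⟩ | h
    · exact absurd (K.adjK h0 (Or.inl h) hne) hn
    · exact ⟨p, h⟩
    · exact absurd h (hnoC x p)
    · exact absurd (K.adjK h0 (Or.inr h) hne) hn
  obtain ⟨p2, h2⟩ := hB 2 (c.N (by decide)) (c.ne (by decide))
  obtain ⟨p3, h3⟩ := hB 3 (c.N (by decide)) (c.ne (by decide))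
  obtain ⟨p4, h4⟩ := hB 4 (c.N (by decide)) (c.ne (by decide))
  have e23 : p2 = p3 := by
    by_contra h; exact K.aBB p2 p3 h _ h2 _ h3 a23
  have e34 : p3 = p4 := by
    by_contra h; exact K.aBB p3 p4 h _ h3 _ h4 a34
  subst e23; subst e34
  exact n24 (K.clB p2 h2 h4 (c.ne (by decide)))

theorem noCyc_6 (K : Bk Q) (c : Cyc Q 6) : False := by
  have hnoC : ∀ k q, c.u k ∉ K.C q := by
    intro k q h
    exact K.notC_6 (c.rot k) (i := q) (by rw [Cyc.rot_u, zero_add]; exact h)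
  have hnoK : ∀ k, ¬(c.u k ∈ K.A ∨ c.u k ∈ K.F) := by
    intro k h
    exact K.noK_6 (c.rot k) (fun x q => hnoC (x + k) q)
      (by rw [Cyc.rot_u, zero_add]; exact h)
  have hB : ∀ x : ZMod 6, ∃ p, c.u x ∈ K.B p := by
    intro x
    rcases K.cover (c.u x) with h | ⟨p, h⟩ | ⟨p, h⟩ | h
    · exact absurd (Or.inl h) (hnoK x)
    · exact ⟨p, h⟩
    · exact absurd h (hnoC x p)
    · exact absurd (Or.inr h) (hnoK x)
  obtain ⟨p0, h0⟩ := hB 0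
  obtain ⟨p1, h1⟩ := hB 1
  obtain ⟨p2, h2⟩ := hB 2
  have e01 : p0 = p1 := by
    by_contra h; exact K.aBB p0 p1 h _ h0 _ h1 (c.A (by decide))
  have e12 : p1 = p2 := by
    by_contra h; exact K.aBB p1 p2 h _ h1 _ h2 (c.A (by decide))
  subst e01; subst e12
  exact (c.N (by decide) : ¬Q.Adj (c.u 0) (c.u 2)) (K.clB p0 h0 h2 (c.ne (by decide)))

theorem shape2_7 (K : Bk Q) (c : Cyc Q 7) {i m : Fin 3}
    (h0 : c.u 0 ∈ K.C i) (h1 : c.u 1 ∈ K.F) (h5 : c.u 6 ∈ K.C m) : False := by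
  have a01 : Q.Adj (c.u 0) (c.u 1) := c.A (by decide)
  have n15 : ¬Q.Adj (c.u 1) (c.u 6) := c.N (by decide)
  have n30 : ¬Q.Adj (c.u 3) (c.u 0) := c.N (by decide)
  have n13 : ¬Q.Adj (c.u 1) (c.u 3) := c.N (by decide)
  have n35 : ¬Q.Adj (c.u 3) (c.u 6) := c.N (by decide)
  have hij : i ≠ K.jstar := by
    rintro rfl; exact K.aFC _ h1 _ h0 a01.symm
  have hmj : m = K.jstar := by
    by_contra hm; exact n15 (K.cFC m hm _ h1 _ h5)
  rcases K.cover (c.u 3) with h3 | ⟨k, h3⟩ | ⟨k, h3⟩ | h3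
  · exact n13 (K.cFA _ h1 _ h3)
  · rcases eq_or_ne k K.jstar with hk | hk
    · exact n35 (K.cBC K.jstar _ (hk ▸ h3) _ (hmj ▸ h5))
    · exact n13 (K.cFB k hk _ h1 _ h3)
  · exact n30 (K.adjC h3 h0 (c.ne (by decide)))
  · exact n13 (K.clF h1 h3 (c.ne (by decide)))

theorem shape1_7 (K : Bk Q) (c : Cyc Q 7) {i m : Fin 3}
    (h0 : c.u 0 ∈ K.C i) (h1 : c.u 1 ∈ K.B i) (h5 : c.u 6 ∈ K.C m) : False := by
  have a12 : Q.Adj (c.u 1) (c.u 2) := c.A (by decide)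
  have a45 : Q.Adj (c.u 5) (c.u 6) := c.A (by decide)
  have a23 : Q.Adj (c.u 2) (c.u 3) := c.A (by decide)
  have n15 : ¬Q.Adj (c.u 1) (c.u 6) := c.N (by decide)
  have n20 : ¬Q.Adj (c.u 2) (c.u 0) := c.N (by decide)
  have n40 : ¬Q.Adj (c.u 5) (c.u 0) := c.N (by decide)
  have n41 : ¬Q.Adj (c.u 5) (c.u 1) := c.N (by decide)
  have n42 : ¬Q.Adj (c.u 5) (c.u 2) := c.N (by decide)
  have n30 : ¬Q.Adj (c.u 3) (c.u 0) := c.N (by decide)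
  have n31 : ¬Q.Adj (c.u 3) (c.u 1) := c.N (by decide)
  have n35 : ¬Q.Adj (c.u 3) (c.u 6) := c.N (by decide)
  have hmi : m ≠ i := by
    rintro rfl; exact n15 (K.cBC m _ h1 _ h5)
  -- u2 ∈ A
  have h2 : c.u 2 ∈ K.A := by
    rcases K.cover (c.u 2) with h2 | ⟨k, h2⟩ | ⟨k, h2⟩ | h2
    · exact h2
    · have hk : k = i := by
        by_contra hk
        exact K.aBB k i hk _ h2 _ h1 a12.symm
      exact (n20 (K.cBC i _ (hk ▸ h2) _ h0)).elim
    · exact (n20 (K.adjC h2 h0 (c.ne (by decide)))).elim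
    · rcases eq_or_ne i K.jstar with rfl | hi
      · exact (K.aFB _ h2 _ h1 a12.symm).elim
      · exact (n20 (K.cFC i hi _ h2 _ h0)).elim
  -- u_{n-2} ∈ B m with m = istar
  have h4 : c.u 5 ∈ K.B m ∧ m = K.istar := by
    rcases K.cover (c.u 5) with h4 | ⟨k, h4⟩ | ⟨k, h4⟩ | h4
    · exact (n42 (K.clA h4 h2 (c.ne (by decide)))).elim
    · have hk : k = m := by
        by_contra hk; exact K.aBC k m hk _ h4 _ h5 a45
      subst hk
      refine ⟨h4, ?_⟩
      by_contra hm
      exact n42 ((K.cAB k hm _ h2 _ h4).symm)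
    · exact (n40 (K.adjC h4 h0 (c.ne (by decide)))).elim
    · exact (n42 (K.cFA _ h4 _ h2)).elim
  obtain ⟨h4, hmistar⟩ := h4
  have hii : i ≠ K.istar := fun e => hmi (hmistar.trans e.symm)
  -- u3
  rcases K.cover (c.u 3) with h3 | ⟨k, h3⟩ | ⟨k, h3⟩ | h3
  · exact n31 (K.cAB i hii _ h3 _ h1)
  · have hkm : k ≠ m := by
      rintro rfl; exact n35 (K.cBC k _ h3 _ h5)
    have hki : k ≠ i := by
      rintro rfl; exact n31 (K.clB k h3 h1 (c.ne (by decide)))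
    have a34 : Q.Adj (c.u 3) (c.u 4) := c.A (by decide)
    have a46 : Q.Adj (c.u 4) (c.u 5) := c.A (by decide)
    have n42' : ¬Q.Adj (c.u 4) (c.u 2) := c.N (by decide)
    have n40' : ¬Q.Adj (c.u 4) (c.u 0) := c.N (by decide)
    rcases K.cover (c.u 4) with h4' | ⟨l, h4'⟩ | ⟨l, h4'⟩ | h4'
    · exact n42' (K.clA h4' h2 (c.ne (by decide)))
    · rcases eq_or_ne l m with rfl | hlm
      · exact K.aBB _ _ (fun e => hkm e.symm) _ h4' _ h3 a34.symm
      · exact K.aBB _ _ hlm _ h4' _ h4 a46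
    · exact n40' (K.adjC h4' h0 (c.ne (by decide)))
    · exact n42' (K.cFA _ h4' _ h2)
  · exact absurd (K.adjC h3 h0 (c.ne (by decide))) n30
  · have hi : i = K.jstar := by
      by_contra hi; exact n30 (K.cFC i hi _ h3 _ h0)
    have hm : m = K.jstar := by
      by_contra hm; exact n35 (K.cFC m hm _ h3 _ h5)
    exact hmi (hm.trans hi.symm)

theorem notC_7 (K : Bk Q) (c : Cyc Q 7) {i : Fin 3} (h0 : c.u 0 ∈ K.C i) : False := by
  have a01 : Q.Adj (c.u 0) (c.u 1) := c.A (by decide)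
  have a50 : Q.Adj (c.u 6) (c.u 0) := c.A (by decide)
  have n15 : ¬Q.Adj (c.u 1) (c.u 6) := c.N (by decide)
  have cl1 : c.u 1 ∈ K.B i ∨ (∃ m, c.u 1 ∈ K.C m) ∨ c.u 1 ∈ K.F := by
    rcases K.cover (c.u 1) with h | ⟨k, h⟩ | ⟨k, h⟩ | h
    · exact absurd a01.symm (K.aAC i _ h _ h0)
    · have hk : k = i := by
        by_contra hk; exact K.aBC k i hk _ h _ h0 a01.symm
      exact Or.inl (hk ▸ h)
    · exact Or.inr (Or.inl ⟨k, h⟩)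
    · exact Or.inr (Or.inr h)
  have cl5 : c.u 6 ∈ K.B i ∨ (∃ m, c.u 6 ∈ K.C m) ∨ c.u 6 ∈ K.F := by
    rcases K.cover (c.u 6) with h | ⟨k, h⟩ | ⟨k, h⟩ | h
    · exact absurd a50 (K.aAC i _ h _ h0)
    · have hk : k = i := by
        by_contra hk; exact K.aBC k i hk _ h _ h0 a50
      exact Or.inl (hk ▸ h)
    · exact Or.inr (Or.inl ⟨k, h⟩)
    · exact Or.inr (Or.inr h)
  rcases cl1 with h1 | ⟨m, h1⟩ | h1 <;> rcases cl5 with h5 | ⟨m', h5⟩ | h5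
  · exact n15 (K.clB i h1 h5 (c.ne (by decide)))
  · exact K.shape1_7 c h0 h1 h5
  · have hi : i ≠ K.jstar := by
      rintro rfl; exact K.aFC _ h5 _ h0 a50
    exact n15 (K.cFB i hi _ h5 _ h1).symm
  · exact K.shape1_7 c.mir
      (by rw [Cyc.mir_u, neg_zero]; exact h0)
      (by rw [Cyc.mir_u, (by decide : -(1 : ZMod 7) = 6)]; exact h5)
      (by rw [Cyc.mir_u, (by decide : -(6 : ZMod 7) = 1)]; exact h1)
  · exact n15 (K.adjC h1 h5 (c.ne (by decide)))
  · exact K.shape2_7 c.mir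
      (by rw [Cyc.mir_u, neg_zero]; exact h0)
      (by rw [Cyc.mir_u, (by decide : -(1 : ZMod 7) = 6)]; exact h5)
      (by rw [Cyc.mir_u, (by decide : -(6 : ZMod 7) = 1)]; exact h1)
  · have hi : i ≠ K.jstar := by
      rintro rfl; exact K.aFC _ h1 _ h0 a01.symm
    exact n15 (K.cFB i hi _ h1 _ h5)
  · exact K.shape2_7 c h0 h1 h5
  · exact n15 (K.clF h1 h5 (c.ne (by decide)))

theorem noK_7 (K : Bk Q) (c : Cyc Q 7) (hnoC : ∀ k q, c.u k ∉ K.C q)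
    (h0 : c.u 0 ∈ K.A ∨ c.u 0 ∈ K.F) : False := by
  have a23 : Q.Adj (c.u 2) (c.u 3) := c.A (by decide)
  have a34 : Q.Adj (c.u 3) (c.u 4) := c.A (by decide)
  have n24 : ¬Q.Adj (c.u 2) (c.u 4) := c.N (by decide)
  have hB : ∀ x : ZMod 7, ¬Q.Adj (c.u 0) (c.u x) → c.u 0 ≠ c.u x → ∃ p, c.u x ∈ K.B p := by
    intro x hn hne
    rcases K.cover (c.u x) with h | ⟨p, h⟩ | ⟨p, h⟩ | h
    · exact absurd (K.adjK h0 (Or.inl h) hne) hn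
    · exact ⟨p, h⟩
    · exact absurd h (hnoC x p)
    · exact absurd (K.adjK h0 (Or.inr h) hne) hn
  obtain ⟨p2, h2⟩ := hB 2 (c.N (by decide)) (c.ne (by decide))
  obtain ⟨p3, h3⟩ := hB 3 (c.N (by decide)) (c.ne (by decide))
  obtain ⟨p4, h4⟩ := hB 4 (c.N (by decide)) (c.ne (by decide))
  have e23 : p2 = p3 := by
    by_contra h; exact K.aBB p2 p3 h _ h2 _ h3 a23
  have e34 : p3 = p4 := by
    by_contra h; exact K.aBB p3 p4 h _ h3 _ h4 a34
  subst e23; subst e34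
  exact n24 (K.clB p2 h2 h4 (c.ne (by decide)))

theorem noCyc_7 (K : Bk Q) (c : Cyc Q 7) : False := by
  have hnoC : ∀ k q, c.u k ∉ K.C q := by
    intro k q h
    exact K.notC_7 (c.rot k) (i := q) (by rw [Cyc.rot_u, zero_add]; exact h)
  have hnoK : ∀ k, ¬(c.u k ∈ K.A ∨ c.u k ∈ K.F) := by
    intro k h
    exact K.noK_7 (c.rot k) (fun x q => hnoC (x + k) q)
      (by rw [Cyc.rot_u, zero_add]; exact h)
  have hB : ∀ x : ZMod 7, ∃ p, c.u x ∈ K.B p := by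
    intro x
    rcases K.cover (c.u x) with h | ⟨p, h⟩ | ⟨p, h⟩ | h
    · exact absurd (Or.inl h) (hnoK x)
    · exact ⟨p, h⟩
    · exact absurd h (hnoC x p)
    · exact absurd (Or.inr h) (hnoK x)
  obtain ⟨p0, h0⟩ := hB 0
  obtain ⟨p1, h1⟩ := hB 1
  obtain ⟨p2, h2⟩ := hB 2
  have e01 : p0 = p1 := by
    by_contra h; exact K.aBB p0 p1 h _ h0 _ h1 (c.A (by decide))
  have e12 : p1 = p2 := by
    by_contra h; exact K.aBB p1 p2 h _ h1 _ h2 (c.A (by decide))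
  subst e01; subst e12
  exact (c.N (by decide) : ¬Q.Adj (c.u 0) (c.u 2)) (K.clB p0 h0 h2 (c.ne (by decide)))

end Bk

namespace Bk
variable {Q : SimpleGraph W}

lemma fin3_succ_ne : ∀ s : Fin 3, s + 1 ≠ s := by decide
lemma fin3_succ2_ne : ∀ s : Fin 3, s + 2 ≠ s := by decide
lemma fin3_succ_ne_succ2 : ∀ s : Fin 3, s + 1 ≠ s + 2 := by decide

/-- an element of A adjacent to a given element of any B i -/
lemma adjAtoB (K : Bk Q) {i : Fin 3} {x : W} (hx : x ∈ K.B i) :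
    ∃ a ∈ K.A, Q.Adj a x := by
  rcases eq_or_ne i K.istar with rfl | hi
  · obtain ⟨a, ha, haB⟩ := K.topA
    exact ⟨a, ha, haB x hx⟩
  · obtain ⟨a, ha⟩ := K.neA
    exact ⟨a, ha, K.cAB i hi a ha x hx⟩

theorem pentagonEmb (K : Bk Q) : Nonempty (pentagon 3 ↪g Q) := by
  classical
  obtain ⟨a, haA, haB⟩ := K.topA
  set b : Fin 3 → W := fun i => (K.neB i).choose with hbdef
  have hb : ∀ i, b i ∈ K.B i := fun i => (K.neB i).choose_spec
  set c : Fin 3 → W := fun i => (K.neC i).choose with hcdef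
  have hc : ∀ i, c i ∈ K.C i := fun i => (K.neC i).choose_spec
  have hab : ∀ i, Q.Adj a (b i) := by
    intro i
    rcases eq_or_ne i K.istar with hi | hi
    · exact haB _ (hi ▸ hb i)
    · exact K.cAB i hi a haA _ (hb i)
  refine ⟨⟨⟨Sum.elim (fun _ => a) (Sum.elim b c), show Function.Injective _ from ?_⟩, ?_⟩⟩
  · -- injective
    rintro (⟨⟩ | i | i) (⟨⟩ | j | j) h <;> simp only [Sum.elim_inl, Sum.elim_inr] at h
    · rfl
    · exact absurd h (hab j).ne
    · exact absurd h ((K.dAC j).ne_of_mem haA (hc j))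
    · exact absurd h.symm (hab i).ne
    · rcases eq_or_ne i j with rfl | hij
      · rfl
      · exact absurd h ((K.dBB i j hij).ne_of_mem (hb i) (hb j))
    · exact absurd h ((K.dBC i j).ne_of_mem (hb i) (hc j))
    · exact absurd h.symm ((K.dAC i).ne_of_mem haA (hc i))
    · exact absurd h.symm ((K.dBC j i).ne_of_mem (hb j) (hc i))
    · rcases eq_or_ne i j with rfl | hij
      · rfl
      · exact absurd h (K.cCC i j hij _ (hc i) _ (hc j)).ne
  · -- map_rel_iff
    rintro (⟨⟩ | i | i) (⟨⟩ | j | j) <;>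
      simp only [Function.Embedding.coeFn_mk, Sum.elim_inl, Sum.elim_inr]
    · exact iff_of_false (Q.loopless.irrefl a) ((pentagon 3).loopless.irrefl _)
    · exact iff_of_true (hab j) (by simp [pentagon, SimpleGraph.fromRel_adj])
    · exact iff_of_false (K.aAC j a haA _ (hc j))
        (by simp [pentagon, SimpleGraph.fromRel_adj])
    · exact iff_of_true (hab i).symm (by simp [pentagon, SimpleGraph.fromRel_adj])
    · refine iff_of_false ?_ (by simp [pentagon, SimpleGraph.fromRel_adj])
      rcases eq_or_ne i j with rfl | hij
      · exact Q.loopless.irrefl _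
      · exact K.aBB i j hij _ (hb i) _ (hb j)
    · rcases eq_or_ne i j with rfl | hij
      · exact iff_of_true (K.cBC i _ (hb i) _ (hc i))
          (by simp [pentagon, SimpleGraph.fromRel_adj])
      · exact iff_of_false (K.aBC i j hij _ (hb i) _ (hc j))
          (by simp [pentagon, SimpleGraph.fromRel_adj, hij])
    · exact iff_of_false (fun h => K.aAC i a haA _ (hc i) h.symm)
        (by simp [pentagon, SimpleGraph.fromRel_adj])
    · rcases eq_or_ne j i with rfl | hij
      · exact iff_of_true (K.cBC j _ (hb j) _ (hc j)).symm
          (by simp [pentagon, SimpleGraph.fromRel_adj])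
      · exact iff_of_false (fun h => K.aBC j i hij _ (hb j) _ (hc i) h.symm)
          (by simp [pentagon, SimpleGraph.fromRel_adj, hij])
    · rcases eq_or_ne i j with rfl | hij
      · exact iff_of_false (Q.loopless.irrefl _) ((pentagon 3).loopless.irrefl _)
      · exact iff_of_true (K.cCC i j hij _ (hc i) _ (hc j))
          (by simp [pentagon, SimpleGraph.fromRel_adj, hij])

theorem anticonnected (K : Bk Q) : Qᶜ.Connected := by
  classical
  obtain ⟨a0, ha0⟩ := K.neA
  set cc : Fin 3 → W := fun i => (K.neC i).choose with hccdef
  have hcc : ∀ i, cc i ∈ K.C i := fun i => (K.neC i).choose_spec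
  have hac : ∀ (x : W), x ∈ K.A → ∀ (m : Fin 3) (y : W), y ∈ K.C m → Qᶜ.Adj x y := by
    intro x hx m y hy
    rw [SimpleGraph.compl_adj]
    exact ⟨(K.dAC m).ne_of_mem hx hy, K.aAC m x hx y hy⟩
  have key : ∀ v, Qᶜ.Reachable v a0 := by
    intro v
    rcases K.cover v with hv | ⟨i, hv⟩ | ⟨i, hv⟩ | hv
    · rcases eq_or_ne v a0 with rfl | hne
      · exact SimpleGraph.Reachable.refl _
      · exact ((hac v hv 0 _ (hcc 0)).reachable).trans
          ((hac a0 ha0 0 _ (hcc 0)).reachable).symm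
    · refine (SimpleGraph.Adj.reachable ?_).trans
        ((hac a0 ha0 (i+1) _ (hcc (i+1))).reachable).symm
      rw [SimpleGraph.compl_adj]
      exact ⟨(K.dBC i (i+1)).ne_of_mem hv (hcc (i+1)),
        K.aBC i (i+1) (fin3_succ_ne i).symm v hv _ (hcc (i+1))⟩
    · exact ((hac a0 ha0 i v hv).reachable).symm
    · refine (SimpleGraph.Adj.reachable ?_).trans
        ((hac a0 ha0 K.jstar _ (hcc K.jstar)).reachable).symm
      rw [SimpleGraph.compl_adj]
      exact ⟨((K.dCF K.jstar).ne_of_mem (hcc K.jstar) hv).symm,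
        K.aFC v hv _ (hcc K.jstar)⟩
  rw [SimpleGraph.connected_iff]
  exact ⟨fun u v => (key u).trans (key v).symm, ⟨a0⟩⟩

theorem noSimplicial (K : Bk Q) (v : W) (hS : Q.IsClique (Q.neighborSet v)) : False := by
  classical
  have mem : ∀ x : W, Q.Adj v x → x ∈ Q.neighborSet v := fun x h => h
  rcases K.cover v with hv | ⟨i, hv⟩ | ⟨i, hv⟩ | hv
  · -- v ∈ A : two b's
    obtain ⟨x, hx⟩ := K.neB (K.istar + 1)
    obtain ⟨y, hy⟩ := K.neB (K.istar + 2)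
    exact K.aBB _ _ (fin3_succ_ne_succ2 K.istar) x hx y hy
      (hS (mem x (K.cAB _ (fin3_succ_ne K.istar) v hv x hx))
          (mem y (K.cAB _ (fin3_succ2_ne K.istar) v hv y hy))
          ((K.dBB _ _ (fin3_succ_ne_succ2 K.istar)).ne_of_mem hx hy))
  · -- v ∈ B i : c i and an A-neighbor
    obtain ⟨x, hx⟩ := K.neC i
    obtain ⟨y, hyA, hyv⟩ := K.adjAtoB hv
    exact K.aAC i y hyA x hx
      (hS (mem y hyv.symm) (mem x (K.cBC i v hv x hx))
        ((K.dAC i).ne_of_mem hyA hx))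
  · -- v ∈ C i : b i and c (i+1)
    obtain ⟨x, hx⟩ := K.neB i
    obtain ⟨y, hy⟩ := K.neC (i + 1)
    exact K.aBC i (i+1) (fin3_succ_ne i).symm x hx y hy
      (hS (mem x (K.cBC i x hx v hv).symm)
          (mem y (K.cCC i (i+1) (fin3_succ_ne i).symm v hv y hy))
          ((K.dBC i (i+1)).ne_of_mem hx hy))
  · -- v ∈ F : a and c (jstar+1)
    obtain ⟨x, hxA⟩ := K.neA
    obtain ⟨y, hy⟩ := K.neC (K.jstar + 1)
    exact K.aAC _ x hxA y hy
      (hS (mem x (K.cFA v hv x hxA)) (mem y (K.cFC _ (fin3_succ_ne K.jstar) v hv y hy))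
          ((K.dAC _).ne_of_mem hxA hy))

theorem noUniversal (K : Bk Q) (v : W) (hU : ∀ w, w ≠ v → Q.Adj v w) : False := by
  rcases K.cover v with hv | ⟨i, hv⟩ | ⟨i, hv⟩ | hv
  · obtain ⟨w, hw⟩ := K.neC 0
    exact K.aAC 0 v hv w hw (hU w ((K.dAC 0).ne_of_mem hv hw).symm)
  · obtain ⟨w, hw⟩ := K.neC (i + 1)
    exact K.aBC i (i+1) (fin3_succ_ne i).symm v hv w hw
      (hU w ((K.dBC i (i+1)).ne_of_mem hv hw).symm)
  · obtain ⟨w, hwA⟩ := K.neA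
    exact K.aAC i w hwA v hv (hU w ((K.dAC i).ne_of_mem hwA hv)).symm
  · obtain ⟨w, hw⟩ := K.neB K.jstar
    exact K.aFB v hv w hw (hU w ((K.dBF K.jstar).ne_of_mem hw hv))

end Bk


theorem bk_of_partition {Q : SimpleGraph W} {A : Set W} {B C : Fin 3 → Set W} {F : Set W}
    (h : IsFiveBasketPartition Q A B C F) : Nonempty (Bk Q) := by
  obtain ⟨hAB, hAC, hAF, hBB, hCC, hBC, hBF, hCF, hcov, hclA, hclB, hclC, hclF,
    hneA, hneB, hneC, haBB, hcCC, haAC, hcBC, haBC,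
    ⟨istar, hcAB, hnest, a0, ha0, ha0B⟩, ⟨jstar, hcF, haF⟩⟩ := h
  refine ⟨{ A := A, B := B, C := C, F := F, istar := istar, jstar := jstar
            cover := ?_, dAC := hAC, dBB := hBB, dBC := hBC, dBF := hBF, dCF := hCF
            clA := hclA, clB := hclB, clC := hclC, clF := hclF
            neA := hneA, neB := hneB, neC := hneC
            aBB := fun i j hij b hb b' hb' => haBB i j hij b hb b' hb'
            cCC := fun i j hij c hc c' hc' => hcCC i j hij c hc c' hc'
            aAC := fun i a ha c hc => haAC i a ha c hc
            cBC := fun i b hb c hc => hcBC i b hb c hc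
            aBC := fun i j hij b hb c hc => haBC i j hij b hb c hc
            cAB := fun i hi a ha b hb => hcAB i hi a ha b hb
            nest := ?_, topA := ⟨a0, ha0, fun b hb => ha0B hb⟩
            cFA := ?_, cFB := ?_, cFC := ?_
            aFB := fun f hf b hb => haF f hf b (Or.inl hb)
            aFC := fun f hf c hc => haF f hf c (Or.inr hc) }⟩
  · intro v
    have hv : v ∈ A ∪ (⋃ i, B i) ∪ (⋃ i, C i) ∪ F := by rw [hcov]; trivial
    rcases hv with ((h | h) | h) | h
    · exact Or.inl h
    · exact Or.inr (Or.inl (by simpa using h))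
    · exact Or.inr (Or.inr (Or.inl (by simpa using h)))
    · exact Or.inr (Or.inr (Or.inr h))
  · intro a ha a' ha'
    rcases hnest a ha a' ha' with h | h
    · exact Or.inl fun b hb hab => (h ⟨hab, hb⟩).1
    · exact Or.inr fun b hb hab => (h ⟨hab, hb⟩).1
  · intro f hf a ha
    exact hcF f hf a (by
      intro hmem
      rcases hmem with (h | h) | h
      · exact (hAB jstar).ne_of_mem ha h rfl
      · exact (hAC jstar).ne_of_mem ha h rfl
      · exact hAF.ne_of_mem ha h rfl)
  · intro i hi f hf b hb
    exact hcF f hf b (by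
      intro hmem
      rcases hmem with (h | h) | h
      · exact hi ((hBB i jstar (by exact fun e => hi e)).ne_of_mem hb h rfl).elim
      · exact (hBC i jstar).ne_of_mem hb h rfl
      · exact (hBF i).ne_of_mem hb h rfl)
  · intro i hi f hf c hc
    exact hcF f hf c (by
      intro hmem
      rcases hmem with (h | h) | h
      · exact (hBC jstar i).ne_of_mem h hc rfl
      · exact (hCC i jstar hi).ne_of_mem hc h rfl
      · exact (hCF i).ne_of_mem hc h rfl)

theorem statement_7 {W : Type} [Fintype W] (Q : SimpleGraph W)
    (hQ : IsFiveBasket Q) :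
    (IndFree Q twoP3 ∧ IndFree Q (cycleG 4) ∧ IndFree Q (cycleG 6) ∧
      IndFree Q (cycleG 7) ∧ IndFree Q T0) ∧
    Nonempty (pentagon 3 ↪g Q) ∧
    Qᶜ.Connected ∧ (∀ v : W, ¬ IsSimplicial Q v) ∧ (∀ v : W, ¬ IsUniversal Q v) := by
  obtain ⟨A, B, C, F, hpart⟩ := hQ
  obtain ⟨K⟩ := bk_of_partition hpart
  refine ⟨⟨?_, ?_, ?_, ?_, ?_⟩, K.pentagonEmb, K.anticonnected,
    fun v hS => K.noSimplicial v hS, fun v hU => K.noUniversal v hU⟩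
  · -- 2P3-free
    constructor
    intro e
    have hne : ∀ x y : Fin 3 ⊕ Fin 3, x ≠ y → e x ≠ e y :=
      fun x y h hh => h (e.injective hh)
    have hna : ∀ x y : Fin 3 ⊕ Fin 3, ¬twoP3.Adj x y → ¬Q.Adj (e x) (e y) :=
      fun x y h hh => h (e.map_adj_iff.1 hh)
    exact K.stable4
      (hne (Sum.inl 0) (Sum.inl 2) (by decide))
      (hne (Sum.inl 0) (Sum.inr 0) (by decide))
      (hne (Sum.inl 0) (Sum.inr 2) (by decide))
      (hne (Sum.inl 2) (Sum.inr 0) (by decide))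
      (hne (Sum.inl 2) (Sum.inr 2) (by decide))
      (hne (Sum.inr 0) (Sum.inr 2) (by decide))
      (hna _ _ (by simp [twoP3, SimpleGraph.fromRel_adj, pathGraph_adj]))
      (hna _ _ (by simp [twoP3, SimpleGraph.fromRel_adj]))
      (hna _ _ (by simp [twoP3, SimpleGraph.fromRel_adj]))
      (hna _ _ (by simp [twoP3, SimpleGraph.fromRel_adj]))
      (hna _ _ (by simp [twoP3, SimpleGraph.fromRel_adj]))
      (hna _ _ (by simp [twoP3, SimpleGraph.fromRel_adj, pathGraph_adj]))
  · exact ⟨fun e => K.noC4 ⟨e, e.injective, fun x y => e.map_adj_iff⟩⟩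
  · exact ⟨fun e => K.noCyc_6 ⟨e, e.injective, fun x y => e.map_adj_iff⟩⟩
  · exact ⟨fun e => K.noCyc_7 ⟨e, e.injective, fun x y => e.map_adj_iff⟩⟩
  · -- T0-free
    constructor
    intro e
    have hne : ∀ x y : Fin 9, x ≠ y → e x ≠ e y :=
      fun x y h hh => h (e.injective hh)
    have hna : ∀ x y : Fin 9, ¬T0.Adj x y → ¬Q.Adj (e x) (e y) :=
      fun x y h hh => h (e.map_adj_iff.1 hh)
    have hT : ∀ x y : Fin 9, ¬(x ≠ y ∧
        ((x, y) ∈ ([(0,1),(0,2),(0,4),(0,5),(1,3),(1,4),(1,5),(2,6),(3,6),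
               (4,7),(5,8),(6,7),(6,8),(7,8)] : List (Fin 9 × Fin 9)) ∨
         (y, x) ∈ ([(0,1),(0,2),(0,4),(0,5),(1,3),(1,4),(1,5),(2,6),(3,6),
               (4,7),(5,8),(6,7),(6,8),(7,8)] : List (Fin 9 × Fin 9)))) →
        ¬T0.Adj x y := by
      intro x y h
      rw [T0, SimpleGraph.fromRel_adj]
      exact h
    exact K.stable4
      (hne 2 3 (by decide)) (hne 2 4 (by decide)) (hne 2 5 (by decide))
      (hne 3 4 (by decide)) (hne 3 5 (by decide)) (hne 4 5 (by decide))
      (hna _ _ (hT 2 3 (by decide))) (hna _ _ (hT 2 4 (by decide)))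
      (hna _ _ (hT 2 5 (by decide))) (hna _ _ (hT 3 4 (by decide)))
      (hna _ _ (hT 3 5 (by decide))) (hna _ _ (hT 4 5 (by decide)))

end Paper
end
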